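/- arXiv:1301.0471 — 5 statements merged into one kernel-verified Lean document; each statement's English description precedes it below -/
import Mathlib

section
/- Let p > 1 and set ρ(y) = (1-y²)^{2/(p-1)} for y ∈ (-1,1). Then there exists a constant C = C(p) > 0 such that for every continuously differentiable function h : (-1,1) → ℝ one has ∫_{-1}^{1} h(y)² ρ(y)/(1-y²) dy ≤ C ∫_{-1}^{1} h(y)² ρ(y) dy + C ∫_{-1}^{1} h'(y)² (1-y²) ρ(y) dy (an inequality in [0,∞], in particular valid whenever the right-hand side is finite). -/
open MeasureTheory Real Set

/-- The weight `ρ(y) = (1-y²)^{2/(p-1)}`. -/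
noncomputable def rho (p : ℝ) (y : ℝ) : ℝ := (1 - y ^ 2) ^ (2 / (p - 1))

lemma aux_w_pos {y : ℝ} (h1 : -1 < y) (h2 : y < 1) : 0 < 1 - y ^ 2 := by nlinarith

lemma core' (c a d w y W : ℝ) (hW : 0 ≤ W) (hy : 1/4 ≤ y) :
    a^2*W ≤ 8*y*(a^2*W) - 8*c*(a*d*W*w) + 16*c^2*(d^2*W*w^2) := by
  nlinarith [mul_nonneg hW (sq_nonneg (a - 4*c*d*w)),
    mul_nonneg (mul_nonneg (by linarith : (0:ℝ) ≤ 8*y - 2) (sq_nonneg a)) hW]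

lemma continuousOn_rho (p : ℝ) : ContinuousOn (rho p) (Ioo (-1:ℝ) 1) := by
  apply ContinuousOn.rpow_const (by fun_prop)
  exact fun y hy => Or.inl (aux_w_pos hy.1 hy.2).ne'

lemma key_right (p : ℝ) (hp : 1 < p) (h : ℝ → ℝ) (hh : ContDiffOn ℝ 1 h (Ioo (-1 : ℝ) 1)) :
    (∫⁻ y in Ioo (1/2 : ℝ) 1, ENNReal.ofReal (h y ^ 2 * rho p y / (1 - y ^ 2))) ≤
      ENNReal.ofReal (20 / (2 / (p - 1))) *
          (∫⁻ y in Ioo (-1 : ℝ) 1, ENNReal.ofReal (h y ^ 2 * rho p y)) +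
        ENNReal.ofReal (16 / (2 / (p - 1)) ^ 2) *
          (∫⁻ y in Ioo (-1 : ℝ) 1, ENNReal.ofReal ((deriv h y) ^ 2 * (1 - y ^ 2) * rho p y)) := by
  set α : ℝ := 2 / (p - 1) with hαdef
  have hα : 0 < α := div_pos two_pos (by linarith)
  set I1 := ∫⁻ y in Ioo (-1 : ℝ) 1, ENNReal.ofReal (h y ^ 2 * rho p y) with hI1def
  set I2 := ∫⁻ y in Ioo (-1 : ℝ) 1, ENNReal.ofReal ((deriv h y) ^ 2 * (1 - y ^ 2) * rho p y)
    with hI2def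
  by_cases hI1top : I1 = ⊤
  · have : ENNReal.ofReal (20 / α) * I1 = ⊤ := by
      rw [hI1top]
      exact ENNReal.mul_top (ENNReal.ofReal_pos.mpr (by positivity)).ne'
    rw [this]
    simp
  by_cases hI2top : I2 = ⊤
  · have : ENNReal.ofReal (16 / α ^ 2) * I2 = ⊤ := by
      rw [hI2top]
      exact ENNReal.mul_top (ENNReal.ofReal_pos.mpr (by positivity)).ne'
    rw [this]
    simp
  -- choose a good starting point s
  have hsub14 : Ioo (1/4:ℝ) (1/2) ⊆ Ioo (-1:ℝ) 1 := fun x hx =>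
    ⟨by linarith [hx.1], by linarith [hx.2]⟩
  have hsex : ∃ s ∈ Ioo (1/4:ℝ) (1/2), ENNReal.ofReal (h s ^ 2 * rho p s) ≤ 5 * I1 := by
    by_contra hcon
    push_neg at hcon
    have hle : (∫⁻ y in Ioo (1/4:ℝ) (1/2), ENNReal.ofReal (h y ^ 2 * rho p y)) ≤ I1 :=
      lintegral_mono_set hsub14
    have hge : 5 * I1 * volume (Ioo (1/4:ℝ) (1/2)) ≤
        ∫⁻ y in Ioo (1/4:ℝ) (1/2), ENNReal.ofReal (h y ^ 2 * rho p y) := by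
      rw [← setLIntegral_const]
      exact lintegral_mono_ae (ae_restrict_of_forall_mem measurableSet_Ioo
        fun y hy => (hcon y hy).le)
    have hvol : volume (Ioo (1/4:ℝ) (1/2)) = ENNReal.ofReal (1/4) := by
      rw [Real.volume_Ioo]; norm_num
    have hchain : 5 * I1 * ENNReal.ofReal (1/4) ≤ I1 := by
      rw [← hvol]; exact hge.trans hle
    -- deduce I1 = 0
    have h5 : (5:ENNReal) * ENNReal.ofReal (1/4) = ENNReal.ofReal (5/4) := by
      rw [show ((5:ENNReal)) = ENNReal.ofReal (5:ℝ) from by norm_num,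
        ← ENNReal.ofReal_mul (by norm_num : (0:ℝ) ≤ 5)]
      norm_num
    have hI1zero : I1 = 0 := by
      by_contra h0
      have h54 : I1 * ENNReal.ofReal (5/4) ≤ I1 * 1 := by
        rw [mul_one, ← h5,
          show I1 * (5 * ENNReal.ofReal (1/4)) = 5 * I1 * ENNReal.ofReal (1/4) from by ring]
        exact hchain
      have hle1 : ENNReal.ofReal (5/4) ≤ 1 := (ENNReal.mul_le_mul_iff_right h0 hI1top).mp h54
      exact absurd hle1 (not_le.mpr (ENNReal.one_lt_ofReal.mpr (by norm_num)))
    -- contradiction: integrand positive everywhere on a set of positive measure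
    have hmeas : AEMeasurable (fun y => ENNReal.ofReal (h y ^ 2 * rho p y))
        (volume.restrict (Ioo (1/4:ℝ) (1/2))) := by
      apply ENNReal.measurable_ofReal.comp_aemeasurable
      exact (((hh.continuousOn.mono hsub14).pow 2).mul
        ((continuousOn_rho p).mono hsub14)).aemeasurable measurableSet_Ioo
    have hz : (∫⁻ y in Ioo (1/4:ℝ) (1/2), ENNReal.ofReal (h y ^ 2 * rho p y)) = 0 :=
      le_antisymm (hle.trans_eq hI1zero) zero_le
    have hae := (lintegral_eq_zero_iff' hmeas).mp hz
    have haemem := ae_restrict_mem (μ := volume) (measurableSet_Ioo (a := (1/4:ℝ)) (b := (1/2:ℝ)))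
    have hfalse : ∀ᵐ y ∂(volume.restrict (Ioo (1/4:ℝ) (1/2))), False := by
      filter_upwards [hae, haemem] with y hy0 hymem
      have := hcon y hymem
      rw [hI1zero] at this
      simp [hy0] at this
    rw [Filter.eventually_false_iff_eq_bot, ae_eq_bot] at hfalse
    have hvol0 := congrArg (fun μ : Measure ℝ => μ univ) hfalse
    simp only [Measure.restrict_apply_univ, Measure.coe_zero, Pi.zero_apply] at hvol0
    rw [Real.volume_Ioo] at hvol0
    exact absurd hvol0 (by rw [ENNReal.ofReal_eq_zero]; norm_num)
  obtain ⟨s, hsmem, hsbound⟩ := hsex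
  obtain ⟨hs14, hs12⟩ := hsmem
  -- the per-interval bound
  have bound : ∀ b : ℝ, s < b → b < 1 →
      (∫⁻ y in Ioo s b, ENNReal.ofReal (h y ^ 2 * rho p y / (1 - y ^ 2))) ≤
        ENNReal.ofReal (20 / α) * I1 + ENNReal.ofReal (16 / α ^ 2) * I2 := by
    intro b hsb hb1
    have hsb' : s ≤ b := hsb.le
    have hIccsub : Icc s b ⊆ Ioo (-1 : ℝ) 1 := fun y hy =>
      ⟨by linarith [hy.1], lt_of_le_of_lt hy.2 hb1⟩
    -- continuity facts
    have hc_h : ContinuousOn h (Icc s b) := hh.continuousOn.mono hIccsub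
    have hc_h' : ContinuousOn (deriv h) (Icc s b) :=
      (hh.continuousOn_deriv_of_isOpen isOpen_Ioo le_rfl).mono hIccsub
    have hc_w : Continuous (fun y : ℝ => 1 - y ^ 2) := by fun_prop
    have hc_rho : ContinuousOn (rho p) (Icc s b) := (continuousOn_rho p).mono hIccsub
    have hc_rho' : ContinuousOn (fun y : ℝ => (1 - y ^ 2) ^ (α - 1)) (Icc s b) := by
      apply ContinuousOn.rpow_const hc_w.continuousOn
      intro y hy
      exact Or.inl (aux_w_pos (hIccsub hy).1 (hIccsub hy).2).ne'
    set G' : ℝ → ℝ := fun y =>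
      2 * h y * deriv h y * rho p y + h y ^ 2 * (-(2*y) * α * (1 - y ^ 2) ^ (α - 1)) with hG'def
    have hG : ∀ y ∈ Icc s b, HasDerivAt (fun y => h y ^ 2 * rho p y) (G' y) y := by
      intro y hy
      obtain ⟨hy1, hy2⟩ := hIccsub hy
      have hdh : HasDerivAt h (deriv h y) y :=
        ((hh.differentiableOn one_ne_zero).differentiableAt
          (isOpen_Ioo.mem_nhds ⟨hy1, hy2⟩)).hasDerivAt
      have hw : HasDerivAt (fun y : ℝ => 1 - y ^ 2) (-(2*y)) y := by
        simpa using ((hasDerivAt_pow 2 y).const_sub 1)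
      have hwpos := aux_w_pos hy1 hy2
      have hrpow : HasDerivAt (fun y : ℝ => (1 - y ^ 2) ^ α)
          (-(2*y) * α * (1 - y ^ 2) ^ (α - 1)) y := hw.rpow_const (Or.inl hwpos.ne')
      have hmul : HasDerivAt (fun y => h y ^ 2 * (1 - y ^ 2) ^ α) _ y := (hdh.pow 2).mul hrpow
      simp only [Pi.pow_apply] at hmul
      simp only [rho, ← hαdef, hG'def]
      convert hmul using 1
      ring
    have hc_G' : ContinuousOn G' (Icc s b) := by
      apply ContinuousOn.add
      · exact ((continuousOn_const.mul hc_h).mul hc_h').mul hc_rho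
      · exact (hc_h.pow 2).mul ((Continuous.continuousOn (by fun_prop)).mul hc_rho')
    -- pointwise inequality
    have ptwise : ∀ y ∈ Icc s b, h y ^ 2 * rho p y / (1 - y ^ 2) ≤
        -(4/α) * G' y + 16/α^2 * ((deriv h y) ^ 2 * (1 - y ^ 2) * rho p y) := by
      intro y hy
      obtain ⟨hy1, hy2⟩ := hIccsub hy
      have hy14 : 1/4 ≤ y := le_trans hs14.le hy.1
      have hwpos := aux_w_pos hy1 hy2
      have hW0 : (0:ℝ) ≤ (1 - y ^ 2) ^ α := Real.rpow_nonneg hwpos.le α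
      have hsubpow : (1 - y ^ 2) ^ (α - 1) = (1 - y ^ 2) ^ α / (1 - y ^ 2) := by
        rw [Real.rpow_sub hwpos, Real.rpow_one]
      simp only [rho, ← hαdef, hG'def, hsubpow]
      rw [div_le_iff₀ hwpos]
      have hexp : (-(4/α) * (2 * h y * deriv h y * (1 - y ^ 2) ^ α +
            h y ^ 2 * (-(2*y) * α * ((1 - y ^ 2) ^ α / (1 - y ^ 2)))) +
          16/α^2 * ((deriv h y) ^ 2 * (1 - y ^ 2) * (1 - y ^ 2) ^ α)) * (1 - y ^ 2)
          = 8*y*(h y ^ 2 * (1 - y ^ 2) ^ α)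
            - 8*(1/α)*(h y * deriv h y * (1 - y ^ 2) ^ α * (1 - y ^ 2))
            + 16*(1/α)^2*((deriv h y) ^ 2 * (1 - y ^ 2) ^ α * (1 - y ^ 2)^2) := by
        field_simp
        ring
      rw [hexp]
      exact core' (1/α) (h y) (deriv h y) (1 - y ^ 2) y ((1 - y ^ 2) ^ α) hW0 hy14
    -- integrability
    have hc_f1 : ContinuousOn (fun y => h y ^ 2 * rho p y / (1 - y ^ 2)) (Icc s b) :=
      ((hc_h.pow 2).mul hc_rho).div hc_w.continuousOn
        (fun y hy => (aux_w_pos (hIccsub hy).1 (hIccsub hy).2).ne')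
    have hc_f2 : ContinuousOn (fun y => (deriv h y) ^ 2 * (1 - y ^ 2) * rho p y) (Icc s b) :=
      ((hc_h'.pow 2).mul hc_w.continuousOn).mul hc_rho
    have hi_f1 : IntervalIntegrable (fun y => h y ^ 2 * rho p y / (1 - y ^ 2)) volume s b :=
      ContinuousOn.intervalIntegrable (by rwa [uIcc_of_le hsb'])
    have hi_f2 : IntervalIntegrable (fun y => (deriv h y) ^ 2 * (1 - y ^ 2) * rho p y)
        volume s b := ContinuousOn.intervalIntegrable (by rwa [uIcc_of_le hsb'])
    have hi_G' : IntervalIntegrable G' volume s b :=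
      ContinuousOn.intervalIntegrable (by rwa [uIcc_of_le hsb'])
    have hi_rhs : IntervalIntegrable
        (fun y => -(4/α) * G' y + 16/α^2 * ((deriv h y) ^ 2 * (1 - y ^ 2) * rho p y))
        volume s b := (hi_G'.const_mul _).add (hi_f2.const_mul _)
    -- FTC
    have hFTC : ∫ y in s..b, G' y = h b ^ 2 * rho p b - h s ^ 2 * rho p s :=
      intervalIntegral.integral_eq_sub_of_hasDerivAt
        (fun y hy => hG y (by rwa [uIcc_of_le hsb'] at hy)) hi_G'
    have hmono := intervalIntegral.integral_mono_on hsb' hi_f1 hi_rhs ptwise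
    have hsplitInt : (∫ y in s..b,
        (-(4/α) * G' y + 16/α^2 * ((deriv h y) ^ 2 * (1 - y ^ 2) * rho p y)))
        = -(4/α) * (h b ^ 2 * rho p b - h s ^ 2 * rho p s)
          + 16/α^2 * ∫ y in s..b, (deriv h y) ^ 2 * (1 - y ^ 2) * rho p y := by
      rw [intervalIntegral.integral_add (hi_G'.const_mul _) (hi_f2.const_mul _),
        intervalIntegral.integral_const_mul, intervalIntegral.integral_const_mul, hFTC]
    have hGb0 : (0:ℝ) ≤ h b ^ 2 * rho p b := by
      apply mul_nonneg (sq_nonneg _)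
      exact Real.rpow_nonneg (aux_w_pos (by linarith) hb1).le _
    have hreal : (∫ y in Ioo s b, h y ^ 2 * rho p y / (1 - y ^ 2))
        ≤ 4/α * (h s ^ 2 * rho p s)
          + 16/α^2 * ∫ y in Ioo s b, (deriv h y) ^ 2 * (1 - y ^ 2) * rho p y := by
      have h1 : (∫ y in Ioo s b, h y ^ 2 * rho p y / (1 - y ^ 2))
          = ∫ y in s..b, h y ^ 2 * rho p y / (1 - y ^ 2) := by
        rw [intervalIntegral.integral_of_le hsb', integral_Ioc_eq_integral_Ioo]
      have h2 : (∫ y in Ioo s b, (deriv h y) ^ 2 * (1 - y ^ 2) * rho p y)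
          = ∫ y in s..b, (deriv h y) ^ 2 * (1 - y ^ 2) * rho p y := by
        rw [intervalIntegral.integral_of_le hsb', integral_Ioc_eq_integral_Ioo]
      rw [h1, h2]
      calc (∫ y in s..b, h y ^ 2 * rho p y / (1 - y ^ 2))
          ≤ ∫ y in s..b,
            (-(4/α) * G' y + 16/α^2 * ((deriv h y) ^ 2 * (1 - y ^ 2) * rho p y)) := hmono
        _ = -(4/α) * (h b ^ 2 * rho p b - h s ^ 2 * rho p s)
            + 16/α^2 * ∫ y in s..b, (deriv h y) ^ 2 * (1 - y ^ 2) * rho p y := hsplitInt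
        _ ≤ 4/α * (h s ^ 2 * rho p s)
            + 16/α^2 * ∫ y in s..b, (deriv h y) ^ 2 * (1 - y ^ 2) * rho p y := by
          have h4α : (0:ℝ) ≤ 4/α := by positivity
          nlinarith [mul_nonneg h4α hGb0]
    -- nonnegativity a.e. and integrability on Ioo
    have hint1 : IntegrableOn (fun y => h y ^ 2 * rho p y / (1 - y ^ 2)) (Ioo s b) volume :=
      (hc_f1.integrableOn_Icc).mono_set Ioo_subset_Icc_self
    have hint2 : IntegrableOn (fun y => (deriv h y) ^ 2 * (1 - y ^ 2) * rho p y)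
        (Ioo s b) volume := (hc_f2.integrableOn_Icc).mono_set Ioo_subset_Icc_self
    have hnn1 : 0 ≤ᵐ[volume.restrict (Ioo s b)] fun y => h y ^ 2 * rho p y / (1 - y ^ 2) := by
      apply ae_restrict_of_forall_mem measurableSet_Ioo
      intro y hy
      have hw := aux_w_pos (by linarith [hy.1] : (-1:ℝ) < y) (lt_trans hy.2 hb1)
      exact div_nonneg (mul_nonneg (sq_nonneg _) (Real.rpow_nonneg hw.le _)) hw.le
    have hnn2 : 0 ≤ᵐ[volume.restrict (Ioo s b)]
        fun y => (deriv h y) ^ 2 * (1 - y ^ 2) * rho p y := by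
      apply ae_restrict_of_forall_mem measurableSet_Ioo
      intro y hy
      have hw := aux_w_pos (by linarith [hy.1] : (-1:ℝ) < y) (lt_trans hy.2 hb1)
      exact mul_nonneg (mul_nonneg (sq_nonneg _) hw.le) (Real.rpow_nonneg hw.le _)
    have hIoo_sub : Ioo s b ⊆ Ioo (-1:ℝ) 1 := fun y hy =>
      ⟨by linarith [hy.1], lt_trans hy.2 hb1⟩
    have hf2le : ENNReal.ofReal (∫ y in Ioo s b, (deriv h y) ^ 2 * (1 - y ^ 2) * rho p y)
        ≤ I2 := by
      rw [ofReal_integral_eq_lintegral_ofReal hint2 hnn2]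
      exact lintegral_mono_set hIoo_sub
    calc (∫⁻ y in Ioo s b, ENNReal.ofReal (h y ^ 2 * rho p y / (1 - y ^ 2)))
        = ENNReal.ofReal (∫ y in Ioo s b, h y ^ 2 * rho p y / (1 - y ^ 2)) :=
          (ofReal_integral_eq_lintegral_ofReal hint1 hnn1).symm
      _ ≤ ENNReal.ofReal (4/α * (h s ^ 2 * rho p s)
            + 16/α^2 * ∫ y in Ioo s b, (deriv h y) ^ 2 * (1 - y ^ 2) * rho p y) :=
          ENNReal.ofReal_le_ofReal hreal
      _ ≤ ENNReal.ofReal (4/α * (h s ^ 2 * rho p s))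
            + ENNReal.ofReal (16/α^2 * ∫ y in Ioo s b, (deriv h y) ^ 2 * (1 - y ^ 2) * rho p y) :=
          ENNReal.ofReal_add_le
      _ ≤ ENNReal.ofReal (4/α) * ENNReal.ofReal (h s ^ 2 * rho p s)
            + ENNReal.ofReal (16/α^2) *
              ENNReal.ofReal (∫ y in Ioo s b, (deriv h y) ^ 2 * (1 - y ^ 2) * rho p y) := by
          rw [ENNReal.ofReal_mul (p := 4/α) (by positivity),
            ENNReal.ofReal_mul (p := 16/α^2) (by positivity)]
      _ ≤ ENNReal.ofReal (4/α) * (5 * I1) + ENNReal.ofReal (16/α^2) * I2 :=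
          add_le_add (mul_le_mul_right hsbound _) (mul_le_mul_right hf2le _)
      _ ≤ ENNReal.ofReal (20/α) * I1 + ENNReal.ofReal (16/α^2) * I2 := by
          apply add_le_add_left
          rw [← mul_assoc]
          apply mul_le_mul_left
          rw [show ((5:ENNReal)) = ENNReal.ofReal (5:ℝ) from by norm_num,
            ← ENNReal.ofReal_mul (by positivity)]
          apply ENNReal.ofReal_le_ofReal
          rw [div_mul_eq_mul_div]
          norm_num
  -- exhaust (s,1) by (s, t n)
  set t : ℕ → ℝ := fun n => 1 - (1 - s)/(n + 2) with htdef
  have h1s : (0:ℝ) < 1 - s := by linarith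
  have hts : ∀ n : ℕ, s < t n := by
    intro n
    have hn0 : (0:ℝ) ≤ (n:ℝ) := Nat.cast_nonneg n
    have := div_lt_self h1s (by linarith : (1:ℝ) < (n:ℝ) + 2)
    simp only [htdef]
    linarith
  have htlt : ∀ n : ℕ, t n < 1 := by
    intro n
    have hn0 : (0:ℝ) ≤ (n:ℝ) := Nat.cast_nonneg n
    have : 0 < (1-s)/((n:ℝ)+2) := div_pos h1s (by linarith)
    simp only [htdef]
    linarith
  have hunion : Ioo s 1 = ⋃ n, Ioo s (t n) := by
    ext y
    simp only [mem_iUnion, mem_Ioo]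
    constructor
    · rintro ⟨hy1, hy2⟩
      have h1y : (0:ℝ) < 1 - y := by linarith
      obtain ⟨n, hn⟩ := exists_nat_gt ((1-s)/(1-y))
      refine ⟨n, hy1, ?_⟩
      have hn0 : (0:ℝ) ≤ (n:ℝ) := Nat.cast_nonneg n
      have h2 : (1-s)/((n:ℝ)+2) < 1 - y := by
        rw [div_lt_iff₀ (show (0:ℝ) < (n:ℝ) + 2 by linarith)]
        have hn2 : (1-s)/(1-y) < (n:ℝ) + 2 := hn.trans (by linarith)
        have := (div_lt_iff₀ h1y).mp hn2
        nlinarith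
      simp only [htdef]
      linarith
    · rintro ⟨n, hy1, hy2⟩
      exact ⟨hy1, hy2.trans (htlt n)⟩
  have hdir : Directed (· ⊆ ·) (fun n => Ioo s (t n)) := by
    have hmono : Monotone (fun n => Ioo s (t n)) := by
      intro m n hmn
      apply Ioo_subset_Ioo le_rfl
      simp only [htdef]
      have hm0 : (0:ℝ) ≤ (m:ℝ) := Nat.cast_nonneg m
      have hcast : ((m:ℝ)+2) ≤ (n:ℝ)+2 := by
        have : (m:ℝ) ≤ (n:ℝ) := Nat.cast_le.mpr hmn
        linarith
      have : (1-s)/((n:ℝ)+2) ≤ (1-s)/((m:ℝ)+2) :=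
        div_le_div_of_nonneg_left h1s.le (by linarith) hcast
      linarith
    exact hmono.directed_le
  calc (∫⁻ y in Ioo (1/2:ℝ) 1, ENNReal.ofReal (h y ^ 2 * rho p y / (1 - y ^ 2)))
      ≤ ∫⁻ y in Ioo s 1, ENNReal.ofReal (h y ^ 2 * rho p y / (1 - y ^ 2)) :=
        lintegral_mono_set (Ioo_subset_Ioo hs12.le le_rfl)
    _ = ⨆ n, ∫⁻ y in Ioo s (t n), ENNReal.ofReal (h y ^ 2 * rho p y / (1 - y ^ 2)) := by
        rw [hunion, setLIntegral_iUnion_of_directed _ hdir]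
    _ ≤ _ := iSup_le fun n => bound (t n) (hts n) (htlt n)

lemma neg_lintegral (F : ℝ → ENNReal) (s : Set ℝ) :
    ∫⁻ y in s, F (-y) = ∫⁻ y in (fun x : ℝ => -x) '' s, F y :=
  (Measure.measurePreserving_neg _).setLIntegral_comp_emb
    (Homeomorph.neg ℝ).measurableEmbedding F s

/-- Hardy–Sobolev estimate: for `p > 1` there is `C = C(p) > 0` such that for every
`C¹` function `h` on `(-1,1)`,
`∫ h² ρ/(1-y²) ≤ C ∫ h² ρ + C ∫ (h')² (1-y²) ρ`, as an inequality in `[0,∞]`. -/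
theorem hardy_sobolev_estimate (p : ℝ) (hp : 1 < p) :
    ∃ C : ℝ, 0 < C ∧
      ∀ h : ℝ → ℝ, ContDiffOn ℝ 1 h (Ioo (-1 : ℝ) 1) →
        (∫⁻ y in Ioo (-1 : ℝ) 1, ENNReal.ofReal ((h y) ^ 2 * rho p y / (1 - y ^ 2))) ≤
          ENNReal.ofReal C *
              (∫⁻ y in Ioo (-1 : ℝ) 1, ENNReal.ofReal ((h y) ^ 2 * rho p y)) +
            ENNReal.ofReal C *
              (∫⁻ y in Ioo (-1 : ℝ) 1,
                ENNReal.ofReal ((deriv h y) ^ 2 * (1 - y ^ 2) * rho p y)) := by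
  have hα : 0 < 2 / (p - 1) := div_pos two_pos (by linarith)
  set α : ℝ := 2 / (p - 1) with hαdef
  refine ⟨40/α + 32/α^2 + 4/3, by positivity, ?_⟩
  intro h hh
  set I1 := ∫⁻ y in Ioo (-1 : ℝ) 1, ENNReal.ofReal ((h y) ^ 2 * rho p y) with hI1def
  set I2 := ∫⁻ y in Ioo (-1 : ℝ) 1, ENNReal.ofReal ((deriv h y) ^ 2 * (1 - y ^ 2) * rho p y)
    with hI2def
  have himg : (fun x : ℝ => -x) '' Ioo (1/2 : ℝ) 1 = Ioo (-1 : ℝ) (-(1/2)) := by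
    ext x
    constructor
    · rintro ⟨y, hy, rfl⟩
      simp only [mem_Ioo] at hy ⊢
      exact ⟨by linarith [hy.2], by linarith [hy.1]⟩
    · intro hx
      simp only [mem_Ioo] at hx
      refine ⟨-x, ?_, by ring⟩
      simp only [mem_Ioo]
      exact ⟨by linarith [hx.2], by linarith [hx.1]⟩
  have himgfull : (fun x : ℝ => -x) '' Ioo (-1 : ℝ) 1 = Ioo (-1 : ℝ) 1 := by
    ext x
    constructor
    · rintro ⟨y, hy, rfl⟩
      simp only [mem_Ioo] at hy ⊢
      exact ⟨by linarith [hy.2], by linarith [hy.1]⟩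
    · intro hx
      simp only [mem_Ioo] at hx
      refine ⟨-x, ?_, by ring⟩
      simp only [mem_Ioo]
      exact ⟨by linarith [hx.2], by linarith [hx.1]⟩
  have hg : ContDiffOn ℝ 1 (fun y => h (-y)) (Ioo (-1 : ℝ) 1) :=
    hh.comp contDiff_neg.contDiffOn
      (fun y hy => ⟨by simpa using neg_lt_neg hy.2, by simpa using neg_lt_neg hy.1⟩)
  have hrho_neg : ∀ y : ℝ, rho p (-y) = rho p y := by
    intro y
    simp [rho]
  -- right piece
  have hR : (∫⁻ y in Ioo (1/2 : ℝ) 1, ENNReal.ofReal (h y ^ 2 * rho p y / (1 - y ^ 2)))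
      ≤ ENNReal.ofReal (20/α) * I1 + ENNReal.ofReal (16/α^2) * I2 :=
    key_right p hp h hh
  -- left piece via reflection
  have hL : (∫⁻ y in Ioo (-1 : ℝ) (-(1/2)), ENNReal.ofReal (h y ^ 2 * rho p y / (1 - y ^ 2)))
      ≤ ENNReal.ofReal (20/α) * I1 + ENNReal.ofReal (16/α^2) * I2 := by
    have e1 : (∫⁻ y in Ioo (-1 : ℝ) (-(1/2)),
          ENNReal.ofReal (h y ^ 2 * rho p y / (1 - y ^ 2)))
        = ∫⁻ y in Ioo (1/2 : ℝ) 1,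
            ENNReal.ofReal ((fun z => h (-z)) y ^ 2 * rho p y / (1 - y ^ 2)) := by
      calc (∫⁻ y in Ioo (-1 : ℝ) (-(1/2)), ENNReal.ofReal (h y ^ 2 * rho p y / (1 - y ^ 2)))
          = ∫⁻ y in (fun x : ℝ => -x) '' Ioo (1/2 : ℝ) 1,
              ENNReal.ofReal (h y ^ 2 * rho p y / (1 - y ^ 2)) := by rw [himg]
        _ = ∫⁻ y in Ioo (1/2 : ℝ) 1,
              (fun z => ENNReal.ofReal (h z ^ 2 * rho p z / (1 - z ^ 2))) (-y) :=
            (neg_lintegral _ _).symm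
        _ = ∫⁻ y in Ioo (1/2 : ℝ) 1,
              ENNReal.ofReal ((fun z => h (-z)) y ^ 2 * rho p y / (1 - y ^ 2)) := by
            apply lintegral_congr
            intro y
            simp only [hrho_neg, neg_sq]
    have e2 : (∫⁻ y in Ioo (-1 : ℝ) 1,
          ENNReal.ofReal ((fun z => h (-z)) y ^ 2 * rho p y)) = I1 := by
      calc (∫⁻ y in Ioo (-1 : ℝ) 1, ENNReal.ofReal ((fun z => h (-z)) y ^ 2 * rho p y))
          = ∫⁻ y in Ioo (-1 : ℝ) 1, (fun z => ENNReal.ofReal (h z ^ 2 * rho p z)) (-y) := by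
            apply lintegral_congr
            intro y
            simp only [hrho_neg, neg_sq]
        _ = ∫⁻ y in (fun x : ℝ => -x) '' Ioo (-1 : ℝ) 1,
              ENNReal.ofReal (h y ^ 2 * rho p y) :=
            neg_lintegral (fun z => ENNReal.ofReal (h z ^ 2 * rho p z)) _
        _ = I1 := by rw [himgfull]
    have e3 : (∫⁻ y in Ioo (-1 : ℝ) 1,
          ENNReal.ofReal ((deriv (fun z => h (-z)) y) ^ 2 * (1 - y ^ 2) * rho p y)) = I2 := by
      calc (∫⁻ y in Ioo (-1 : ℝ) 1,
            ENNReal.ofReal ((deriv (fun z => h (-z)) y) ^ 2 * (1 - y ^ 2) * rho p y))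
          = ∫⁻ y in Ioo (-1 : ℝ) 1,
              (fun z => ENNReal.ofReal ((deriv h z) ^ 2 * (1 - z ^ 2) * rho p z)) (-y) := by
            apply lintegral_congr
            intro y
            simp only
            rw [deriv_comp_neg h y, hrho_neg]
            ring_nf
        _ = ∫⁻ y in (fun x : ℝ => -x) '' Ioo (-1 : ℝ) 1,
              ENNReal.ofReal ((deriv h y) ^ 2 * (1 - y ^ 2) * rho p y) :=
            neg_lintegral (fun z => ENNReal.ofReal ((deriv h z) ^ 2 * (1 - z ^ 2) * rho p z)) _
        _ = I2 := by rw [himgfull]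
    rw [e1]
    have := key_right p hp (fun z => h (-z)) hg
    rw [e2, e3] at this
    exact this
  -- middle piece
  have hM : (∫⁻ y in Icc (-(1/2) : ℝ) (1/2), ENNReal.ofReal (h y ^ 2 * rho p y / (1 - y ^ 2)))
      ≤ ENNReal.ofReal (4/3) * I1 := by
    have step : ∀ y ∈ Icc (-(1/2) : ℝ) (1/2),
        ENNReal.ofReal (h y ^ 2 * rho p y / (1 - y ^ 2))
          ≤ ENNReal.ofReal (4/3) * ENNReal.ofReal (h y ^ 2 * rho p y) := by
      intro y hy
      have hw : (3/4 : ℝ) ≤ 1 - y ^ 2 := by nlinarith [hy.1, hy.2]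
      have hρ : 0 ≤ rho p y := Real.rpow_nonneg (by linarith) _
      rw [← ENNReal.ofReal_mul (by norm_num : (0:ℝ) ≤ 4/3)]
      apply ENNReal.ofReal_le_ofReal
      rw [div_le_iff₀ (by linarith : (0:ℝ) < 1 - y ^ 2)]
      nlinarith [mul_nonneg (sq_nonneg (h y)) hρ]
    calc (∫⁻ y in Icc (-(1/2) : ℝ) (1/2), ENNReal.ofReal (h y ^ 2 * rho p y / (1 - y ^ 2)))
        ≤ ∫⁻ y in Icc (-(1/2) : ℝ) (1/2),
            ENNReal.ofReal (4/3) * ENNReal.ofReal (h y ^ 2 * rho p y) :=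
          lintegral_mono_ae (ae_restrict_of_forall_mem measurableSet_Icc step)
      _ = ENNReal.ofReal (4/3) *
            ∫⁻ y in Icc (-(1/2) : ℝ) (1/2), ENNReal.ofReal (h y ^ 2 * rho p y) :=
          lintegral_const_mul' _ _ ENNReal.ofReal_ne_top
      _ ≤ ENNReal.ofReal (4/3) * I1 := by
          apply mul_le_mul_right
          apply lintegral_mono_set
          intro y hy
          simp only [mem_Icc] at hy
          simp only [mem_Ioo]
          exact ⟨by linarith [hy.1], by linarith [hy.2]⟩
  -- assemble
  have hsplit : Ioo (-1 : ℝ) 1 ⊆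
      Ioo (-1 : ℝ) (-(1/2)) ∪ (Icc (-(1/2) : ℝ) (1/2) ∪ Ioo (1/2 : ℝ) 1) := by
    intro y hy
    rcases lt_or_ge y (-(1/2)) with h1 | h1
    · exact Or.inl ⟨hy.1, h1⟩
    rcases le_or_gt y (1/2) with h2 | h2
    · exact Or.inr (Or.inl ⟨h1, h2⟩)
    · exact Or.inr (Or.inr ⟨h2, hy.2⟩)
  have hc1 : ENNReal.ofReal (20/α) + ENNReal.ofReal (20/α) + ENNReal.ofReal (4/3)
      ≤ ENNReal.ofReal (40/α + 32/α^2 + 4/3) := by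
    rw [← ENNReal.ofReal_add (by positivity) (by positivity),
      ← ENNReal.ofReal_add (by positivity) (by positivity)]
    apply ENNReal.ofReal_le_ofReal
    have h1 : (20:ℝ)/α + 20/α = 40/α := by ring
    have h2 : (0:ℝ) ≤ 32/α^2 := by positivity
    linarith
  have hc2 : ENNReal.ofReal (16/α^2) + ENNReal.ofReal (16/α^2)
      ≤ ENNReal.ofReal (40/α + 32/α^2 + 4/3) := by
    rw [← ENNReal.ofReal_add (by positivity) (by positivity)]
    apply ENNReal.ofReal_le_ofReal
    have h1 : (16:ℝ)/α^2 + 16/α^2 = 32/α^2 := by ring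
    have h2 : (0:ℝ) ≤ 40/α := by positivity
    linarith
  calc (∫⁻ y in Ioo (-1 : ℝ) 1, ENNReal.ofReal (h y ^ 2 * rho p y / (1 - y ^ 2)))
      ≤ ∫⁻ y in Ioo (-1 : ℝ) (-(1/2)) ∪ (Icc (-(1/2) : ℝ) (1/2) ∪ Ioo (1/2 : ℝ) 1),
          ENNReal.ofReal (h y ^ 2 * rho p y / (1 - y ^ 2)) := lintegral_mono_set hsplit
    _ ≤ (∫⁻ y in Ioo (-1 : ℝ) (-(1/2)), ENNReal.ofReal (h y ^ 2 * rho p y / (1 - y ^ 2)))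
          + ((∫⁻ y in Icc (-(1/2) : ℝ) (1/2), ENNReal.ofReal (h y ^ 2 * rho p y / (1 - y ^ 2)))
            + (∫⁻ y in Ioo (1/2 : ℝ) 1, ENNReal.ofReal (h y ^ 2 * rho p y / (1 - y ^ 2)))) := by
        refine (lintegral_union_le _ _ _).trans ?_
        exact add_le_add_right (lintegral_union_le _ _ _) _
    _ ≤ (ENNReal.ofReal (20/α) * I1 + ENNReal.ofReal (16/α^2) * I2)
          + ((ENNReal.ofReal (4/3) * I1)
            + (ENNReal.ofReal (20/α) * I1 + ENNReal.ofReal (16/α^2) * I2)) :=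
        add_le_add hL (add_le_add hM hR)
    _ = (ENNReal.ofReal (20/α) + ENNReal.ofReal (20/α) + ENNReal.ofReal (4/3)) * I1
          + (ENNReal.ofReal (16/α^2) + ENNReal.ofReal (16/α^2)) * I2 := by ring
    _ ≤ ENNReal.ofReal (40/α + 32/α^2 + 4/3) * I1
          + ENNReal.ofReal (40/α + 32/α^2 + 4/3) * I2 :=
        add_le_add (mul_le_mul_left hc1 _) (mul_le_mul_left hc2 _)
end

section
/- Let p > 1. For every d ∈ (-1,1), ∫_{-1}^{1} [ (1/2)(∂_y κ(d,y))² (1-y²) + ((p+1)/(p-1)²) κ(d,y)² − (1/(p+1)) κ(d,y)^{p+1} ] ρ(y) dy = ∫_{-1}^{1} [ ((p+1)/(p-1)²) κ₀² − (1/(p+1)) κ₀^{p+1} ] ρ(y) dy. In other words, E₀((κ(d,·),0)) = E₀((κ₀,0)) for all |d| < 1, where E₀ is the unperturbed energy in similarity variables. -/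
open MeasureTheory Real Set

/-- The constant `κ₀ = (2(p+1)/(p-1)²)^{1/(p-1)}`. -/
noncomputable def kappa0 (p : ℝ) : ℝ := (2 * (p + 1) / (p - 1) ^ 2) ^ (1 / (p - 1))

/-- The soliton `κ(d,y) = κ₀ (1-d²)^{1/(p-1)} (1+dy)^{-2/(p-1)}`. -/
noncomputable def kappa (p d y : ℝ) : ℝ :=
  kappa0 p * (1 - d ^ 2) ^ (1 / (p - 1)) / (1 + d * y) ^ (2 / (p - 1))


-- positivity of 1 + d*y
lemma upos' {d y : ℝ} (hd : d ^ 2 < 1) (hy : y ^ 2 ≤ 1) : 0 < 1 + d * y := by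
  nlinarith [sq_nonneg (d + y), sq_nonneg (d - y)]

lemma kappa0_pos {p : ℝ} (hp : 1 < p) : 0 < kappa0 p := by
  have h1 : (0:ℝ) < 2 * (p + 1) / (p - 1) ^ 2 :=
    div_pos (by linarith) (by nlinarith)
  exact Real.rpow_pos_of_pos h1 _

lemma kappa_pos {p d y : ℝ} (hp : 1 < p) (hd : d ^ 2 < 1) (hu : 0 < 1 + d * y) :
    0 < kappa p d y := by
  unfold kappa
  have h1 : (0:ℝ) < 1 - d ^ 2 := by nlinarith
  exact div_pos (mul_pos (kappa0_pos hp) (Real.rpow_pos_of_pos h1 _))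
    (Real.rpow_pos_of_pos hu _)

lemma hasDerivAt_kappa {p d : ℝ} (y : ℝ) (hp : 1 < p) (hu : 0 < 1 + d * y) :
    HasDerivAt (fun z => kappa p d z)
      (-(2 / (p - 1)) * d * kappa p d y / (1 + d * y)) y := by
  set K := kappa0 p * (1 - d ^ 2) ^ (1 / (p - 1)) with hK
  have hinner : HasDerivAt (fun z : ℝ => 1 + d * z) d y := by
    simpa using ((hasDerivAt_id y).const_mul d).const_add 1
  have hg : HasDerivAt (fun z : ℝ => (1 + d * z) ^ (2 / (p - 1)))
      (d * (2 / (p - 1)) * (1 + d * y) ^ (2 / (p - 1) - 1)) y :=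
    hinner.rpow_const (Or.inl hu.ne')
  have hne : (1 + d * y) ^ (2 / (p - 1)) ≠ 0 := (Real.rpow_pos_of_pos hu _).ne'
  have h := (hasDerivAt_const y K).div hg hne
  have : kappa p d = fun z => K / (1 + d * z) ^ (2 / (p - 1)) := rfl
  rw [show (fun z => kappa p d z) = fun z => K / (1 + d * z) ^ (2 / (p - 1)) from rfl]
  refine h.congr_deriv ?_
  have hsub : (1 + d * y) ^ (2 / (p - 1) - 1)
      = (1 + d * y) ^ (2 / (p - 1)) / (1 + d * y) := by
    rw [Real.rpow_sub hu, Real.rpow_one]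
  rw [hsub]
  have hkval : kappa p d y = K / (1 + d * y) ^ (2 / (p - 1)) := rfl
  rw [hkval]
  set B := (1 + d * y) ^ (2 / (p - 1)) with hB
  have hp1 : p - 1 ≠ 0 := by intro h; simp [sub_eq_zero] at h; linarith
  field_simp [hne, hu.ne', hp1]
  ring

lemma rpow_mul_two {x : ℝ} (hx : 0 ≤ x) (q : ℝ) : x ^ (2 * q) = (x ^ q) ^ 2 := by
  rw [mul_comm, Real.rpow_mul hx, Real.rpow_two]

lemma rpow_mul_four {x : ℝ} (hx : 0 ≤ x) (q : ℝ) : x ^ (4 * q) = (x ^ q) ^ 4 := by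
  rw [mul_comm, Real.rpow_mul hx, ← Real.rpow_natCast (x ^ q) 4]
  norm_num

/-- Antiderivative witnessing the energy identity. -/
noncomputable def FF (p d : ℝ) : ℝ → ℝ := fun y =>
  -(d / (p - 1)) * kappa0 p ^ 2 * ((1 - d ^ 2) ^ (1 / (p - 1))) ^ 2 *
    ((1 - y ^ 2) ^ (2 / (p - 1) + 1) * (1 + d * y) ^ (-(4 / (p - 1) + 1)))

set_option maxHeartbeats 1000000 in
lemma FF_hasDerivAt {p d : ℝ} (y : ℝ) (hp : 1 < p) (hd : d ^ 2 < 1) (hy : y ^ 2 < 1) :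
    HasDerivAt (FF p d)
      (((1 / 2) * (deriv (fun z => kappa p d z) y) ^ 2 * (1 - y ^ 2)
          + ((p + 1) / (p - 1) ^ 2) * (kappa p d y) ^ 2
          - (1 / (p + 1)) * (kappa p d y) ^ (p + 1)) * rho p y
        - ((1 - d ^ 2) / (1 + d * y) ^ 2) *
          ((((p + 1) / (p - 1) ^ 2) * (kappa0 p) ^ 2
            - (1 / (p + 1)) * (kappa0 p) ^ (p + 1)) * rho p ((y + d) / (1 + d * y)))) y := by
  have hu : 0 < 1 + d * y := upos' hd hy.le
  have hs : 0 < 1 - y ^ 2 := by nlinarith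
  have hw : 0 < 1 - d ^ 2 := by nlinarith
  have hp1 : p - 1 ≠ 0 := by intro h; rw [sub_eq_zero] at h; linarith
  have hppos : (0:ℝ) < p + 1 := by linarith
  have hp1 : p - 1 ≠ 0 := by intro h; rw [sub_eq_zero] at h; linarith
  have hk0 : 0 < kappa0 p := kappa0_pos hp
  set A := (1 - y ^ 2) ^ (1 / (p - 1)) with hA
  set B := (1 + d * y) ^ (1 / (p - 1)) with hB
  set E := (1 - d ^ 2) ^ (1 / (p - 1)) with hE
  have hApos : 0 < A := Real.rpow_pos_of_pos hs _
  have hBpos : 0 < B := Real.rpow_pos_of_pos hu _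
  have hEpos : 0 < E := Real.rpow_pos_of_pos hw _
  clear_value A B E
  have e2 : (2:ℝ) / (p - 1) = 2 * (1 / (p - 1)) := by ring
  have e4 : (4:ℝ) / (p - 1) = 4 * (1 / (p - 1)) := by ring
  have hA2 : (1 - y ^ 2) ^ ((2:ℝ) / (p - 1)) = A ^ 2 := by
    rw [e2, rpow_mul_two hs.le, hA]
  have hB4 : (1 + d * y) ^ ((4:ℝ) / (p - 1)) = B ^ 4 := by
    rw [e4, rpow_mul_four hu.le, hB]
  have hkd := (hasDerivAt_kappa y hp hu).deriv
  have R1 : (1 - y ^ 2) ^ (2 / (p - 1) + 1 - 1) = A ^ 2 := by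
    rw [show (2 / (p - 1) + 1 - 1 : ℝ) = 2 / (p - 1) by ring, hA2]
  have R2 : (1 - y ^ 2) ^ (2 / (p - 1) + 1) = (1 - y ^ 2) * A ^ 2 := by
    rw [Real.rpow_add hs, Real.rpow_one, hA2, mul_comm]
  have R3 : (1 + d * y) ^ (-(4 / (p - 1) + 1)) = ((1 + d * y) * B ^ 4)⁻¹ := by
    rw [Real.rpow_neg hu.le, Real.rpow_add hu, Real.rpow_one, hB4, mul_comm]
  have R4 : (1 + d * y) ^ (-(4 / (p - 1) + 1) - 1) = ((1 + d * y) ^ 2 * B ^ 4)⁻¹ := by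
    rw [show (-(4 / (p - 1) + 1) - 1 : ℝ) = -(4 / (p - 1) + 2) by ring,
      Real.rpow_neg hu.le, Real.rpow_add hu, hB4, Real.rpow_two, mul_comm]
  have R5 : rho p y = A ^ 2 := hA2
  have hk9 : kappa0 p ^ (p - 1) = 2 * (p + 1) / (p - 1) ^ 2 := by
    rw [show kappa0 p = (2 * (p + 1) / (p - 1) ^ 2) ^ (1 / (p - 1)) from rfl,
      ← Real.rpow_mul (le_of_lt (div_pos (by linarith) (by nlinarith))), one_div,
      inv_mul_cancel₀ hp1, Real.rpow_one]
  have R9 : kappa0 p ^ (p + 1) = kappa0 p ^ 2 * (2 * (p + 1) / (p - 1) ^ 2) := by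
    rw [show (p + 1 : ℝ) = 2 + (p - 1) by ring, Real.rpow_add hk0, Real.rpow_two, hk9]
    ring
  have hB2 : (1 + d * y) ^ ((2:ℝ) / (p - 1)) = B ^ 2 := by
    rw [e2, rpow_mul_two hu.le, hB]
  have R6 : kappa p d y = kappa0 p * E / B ^ 2 := by
    rw [show kappa p d y
        = kappa0 p * (1 - d ^ 2) ^ (1 / (p - 1)) / (1 + d * y) ^ (2 / (p - 1)) from rfl,
      hB2, ← hE]
  have hE7 : E ^ (p + 1) = (1 - d ^ 2) * E ^ 2 := by
    rw [hE, ← Real.rpow_mul hw.le,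
      show (1 / (p - 1)) * (p + 1) = 2 * (1 / (p - 1)) + 1 by field_simp; ring,
      Real.rpow_add hw, Real.rpow_one, rpow_mul_two hw.le, ← hE, mul_comm]
  have hB7 : (B ^ 2) ^ (p + 1) = B ^ 4 * (1 + d * y) ^ 2 := by
    rw [hB, ← rpow_mul_two hu.le, ← Real.rpow_mul hu.le,
      show (2 * (1 / (p - 1))) * (p + 1) = 4 * (1 / (p - 1)) + 2 by field_simp; ring,
      Real.rpow_add hu, rpow_mul_four hu.le, ← hB, Real.rpow_two]
  have R7 : kappa p d y ^ (p + 1)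
      = kappa0 p ^ 2 * (2 * (p + 1) / (p - 1) ^ 2) * ((1 - d ^ 2) * E ^ 2)
        / (B ^ 4 * (1 + d * y) ^ 2) := by
    rw [R6, Real.div_rpow (by positivity) (by positivity),
      Real.mul_rpow hk0.le hEpos.le, R9, hE7, hB7]
  have R8 : rho p ((y + d) / (1 + d * y)) = E ^ 2 * A ^ 2 / B ^ 4 := by
    have hphi : 1 - ((y + d) / (1 + d * y)) ^ 2
        = (1 - d ^ 2) * (1 - y ^ 2) / (1 + d * y) ^ 2 := by
      rw [div_pow, eq_div_iff (pow_ne_zero 2 hu.ne'), sub_mul, div_mul_cancel₀ _ (pow_ne_zero 2 hu.ne')]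
      ring
    rw [show rho p ((y + d) / (1 + d * y))
        = (1 - ((y + d) / (1 + d * y)) ^ 2) ^ (2 / (p - 1)) from rfl, hphi, e2,
      rpow_mul_two (by positivity), Real.div_rpow (by positivity) (by positivity),
      Real.mul_rpow hw.le hs.le, ← hE, ← hA, ← Real.rpow_natCast (1 + d * y) 2,
      ← Real.rpow_mul hu.le, show ((2:ℕ):ℝ) * (1 / (p - 1)) = 2 * (1 / (p - 1)) by norm_num,
      rpow_mul_two hu.le, ← hB]
    ring
  have h1 : HasDerivAt (fun t : ℝ => 1 - t ^ 2) (-(2 * y)) y := by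
    simpa using (hasDerivAt_pow 2 y).const_sub 1
  have h2 : HasDerivAt (fun t : ℝ => 1 + d * t) d y := by
    simpa using ((hasDerivAt_id y).const_mul d).const_add 1
  have h1r : HasDerivAt (fun t : ℝ => (1 - t ^ 2) ^ (2 / (p - 1) + 1))
      (-(2 * y) * (2 / (p - 1) + 1) * (1 - y ^ 2) ^ (2 / (p - 1) + 1 - 1)) y :=
    h1.rpow_const (Or.inl hs.ne')
  have h2r : HasDerivAt (fun t : ℝ => (1 + d * t) ^ (-(4 / (p - 1) + 1)))
      (d * (-(4 / (p - 1) + 1)) * (1 + d * y) ^ (-(4 / (p - 1) + 1) - 1)) y :=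
    h2.rpow_const (Or.inl hu.ne')
  have hprod := (h1r.mul h2r).const_mul
    (-(d / (p - 1)) * kappa0 p ^ 2 * E ^ 2)
  have hW : -(d / (p - 1)) * kappa0 p ^ 2 * E ^ 2 *
      (-(2 * y) * (2 / (p - 1) + 1) * (1 - y ^ 2) ^ (2 / (p - 1) + 1 - 1) *
          (1 + d * y) ^ (-(4 / (p - 1) + 1)) +
        (1 - y ^ 2) ^ (2 / (p - 1) + 1) *
          (d * (-(4 / (p - 1) + 1)) * (1 + d * y) ^ (-(4 / (p - 1) + 1) - 1)))
      = ((1 / 2) * (deriv (fun z => kappa p d z) y) ^ 2 * (1 - y ^ 2)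
          + ((p + 1) / (p - 1) ^ 2) * (kappa p d y) ^ 2
          - (1 / (p + 1)) * (kappa p d y) ^ (p + 1)) * rho p y
        - ((1 - d ^ 2) / (1 + d * y) ^ 2) *
          ((((p + 1) / (p - 1) ^ 2) * (kappa0 p) ^ 2
            - (1 / (p + 1)) * (kappa0 p) ^ (p + 1)) * rho p ((y + d) / (1 + d * y))) := by
    rw [hkd, R7, R6, R5, R8, R1, R2, R3, R4, R9]
    field_simp
    ring
  rw [hW] at hprod
  have hfun : (fun y : ℝ => -(d / (p - 1)) * kappa0 p ^ 2 * E ^ 2 *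
      ((1 - y ^ 2) ^ (2 / (p - 1) + 1) * (1 + d * y) ^ (-(4 / (p - 1) + 1)))) = FF p d := by
    funext t
    rw [hE]
    rfl
  exact hfun ▸ hprod

lemma sq_le_one' {y : ℝ} (h : y ∈ Icc (-1:ℝ) 1) : y ^ 2 ≤ 1 := by
  nlinarith [h.1, h.2]

lemma rho_continuous {p : ℝ} (hp : 1 < p) : Continuous (rho p) := by
  rw [continuous_iff_continuousAt]
  intro x
  have h : ContinuousAt (fun t : ℝ => t ^ (2 / (p - 1))) (1 - x ^ 2) :=
    Real.continuousAt_rpow_const _ _ (Or.inr (le_of_lt (div_pos two_pos (by linarith))))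
  have hin : ContinuousAt (fun t : ℝ => 1 - t ^ 2) x := by fun_prop
  have := ContinuousAt.comp (f := fun t : ℝ => 1 - t ^ 2) (x := x) h hin
  exact this

lemma kappa_contOn {p d : ℝ} (hp : 1 < p) (hd : d ^ 2 < 1) :
    ContinuousOn (fun y => kappa p d y) (Icc (-1:ℝ) 1) := by
  apply ContinuousOn.div continuousOn_const
  · exact ContinuousOn.rpow_const (by fun_prop)
      (fun y hy => Or.inl (upos' hd (sq_le_one' hy)).ne')
  · exact fun y hy => (Real.rpow_pos_of_pos (upos' hd (sq_le_one' hy)) _).ne'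

lemma f_contOn {p d : ℝ} (hp : 1 < p) (hd : d ^ 2 < 1) :
    ContinuousOn (fun y =>
      ((1 / 2) * (deriv (fun z => kappa p d z) y) ^ 2 * (1 - y ^ 2)
        + ((p + 1) / (p - 1) ^ 2) * (kappa p d y) ^ 2
        - (1 / (p + 1)) * (kappa p d y) ^ (p + 1)) * rho p y) (Icc (-1:ℝ) 1) := by
  have hder : ∀ y ∈ Icc (-1:ℝ) 1,
      (fun y => ((1 / 2) * (-(2 / (p - 1)) * d * kappa p d y / (1 + d * y)) ^ 2 * (1 - y ^ 2)
        + ((p + 1) / (p - 1) ^ 2) * (kappa p d y) ^ 2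
        - (1 / (p + 1)) * (kappa p d y) ^ (p + 1)) * rho p y) y
      = ((1 / 2) * (deriv (fun z => kappa p d z) y) ^ 2 * (1 - y ^ 2)
        + ((p + 1) / (p - 1) ^ 2) * (kappa p d y) ^ 2
        - (1 / (p + 1)) * (kappa p d y) ^ (p + 1)) * rho p y := by
    intro y hy
    rw [(hasDerivAt_kappa y hp (upos' hd (sq_le_one' hy))).deriv]
  apply ContinuousOn.congr _ (fun y hy => (hder y hy).symm)
  have hk := kappa_contOn hp hd
  have hkp : ContinuousOn (fun y => (kappa p d y) ^ (p + 1)) (Icc (-1:ℝ) 1) :=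
    ContinuousOn.rpow_const hk
      (fun y hy => Or.inl (kappa_pos hp hd (upos' hd (sq_le_one' hy))).ne')
  apply ContinuousOn.mul _ (rho_continuous hp).continuousOn
  apply ContinuousOn.sub
  apply ContinuousOn.add
  · apply ContinuousOn.mul
    · apply ContinuousOn.mul continuousOn_const
      apply ContinuousOn.pow
      apply ContinuousOn.div (ContinuousOn.mul continuousOn_const hk) (by fun_prop)
      exact fun y hy => (upos' hd (sq_le_one' hy)).ne'
    · fun_prop
  · exact ContinuousOn.mul continuousOn_const (hk.pow 2)
  · exact ContinuousOn.mul continuousOn_const hkp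

set_option maxHeartbeats 1000000 in
/-- The unperturbed energy of the soliton `(κ(d,·),0)` equals that of `(κ₀,0)`,
for every `d ∈ (-1,1)`. -/
theorem energy_kappa_d_eq_energy_kappa0 (p : ℝ) (hp : 1 < p) :
    ∀ d ∈ Ioo (-1 : ℝ) 1,
      (∫ y in Ioo (-1 : ℝ) 1,
          ((1 / 2) * (deriv (fun z => kappa p d z) y) ^ 2 * (1 - y ^ 2)
            + ((p + 1) / (p - 1) ^ 2) * (kappa p d y) ^ 2
            - (1 / (p + 1)) * (kappa p d y) ^ (p + 1)) * rho p y) =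
      (∫ y in Ioo (-1 : ℝ) 1,
          (((p + 1) / (p - 1) ^ 2) * (kappa0 p) ^ 2
            - (1 / (p + 1)) * (kappa0 p) ^ (p + 1)) * rho p y) := by
  intro d hd
  obtain ⟨hd1, hd2⟩ := hd
  have hdsq : d ^ 2 < 1 := by nlinarith
  have huIcc : uIcc (-1:ℝ) 1 = Icc (-1:ℝ) 1 := uIcc_of_le (by norm_num)
  set f : ℝ → ℝ := fun y =>
      ((1 / 2) * (deriv (fun z => kappa p d z) y) ^ 2 * (1 - y ^ 2)
        + ((p + 1) / (p - 1) ^ 2) * (kappa p d y) ^ 2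
        - (1 / (p + 1)) * (kappa p d y) ^ (p + 1)) * rho p y with hfdef
  set g : ℝ → ℝ := fun u =>
      (((p + 1) / (p - 1) ^ 2) * (kappa0 p) ^ 2
        - (1 / (p + 1)) * (kappa0 p) ^ (p + 1)) * rho p u with hgdef
  set h : ℝ → ℝ := fun y =>
      ((1 - d ^ 2) / (1 + d * y) ^ 2) *
        ((((p + 1) / (p - 1) ^ 2) * (kappa0 p) ^ 2
          - (1 / (p + 1)) * (kappa0 p) ^ (p + 1)) * rho p ((y + d) / (1 + d * y))) with hhdef
  -- continuity facts
  have hfcont : ContinuousOn f (Icc (-1:ℝ) 1) := f_contOn hp hdsq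
  have hhcont : ContinuousOn h (Icc (-1:ℝ) 1) := by
    rw [hhdef]
    apply ContinuousOn.mul
    · exact ContinuousOn.div continuousOn_const (by fun_prop)
        (fun y hy => pow_ne_zero _ (upos' hdsq (sq_le_one' hy)).ne')
    · apply ContinuousOn.mul continuousOn_const
      apply (rho_continuous hp).comp_continuousOn
      exact ContinuousOn.div (by fun_prop) (by fun_prop)
        (fun y hy => (upos' hdsq (sq_le_one' hy)).ne')
  have hfi : IntervalIntegrable f volume (-1) 1 :=
    (huIcc ▸ hfcont).intervalIntegrable
  have hhi : IntervalIntegrable h volume (-1) 1 :=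
    (huIcc ▸ hhcont).intervalIntegrable
  -- FTC : ∫ (f - h) = 0
  have hderivs : ∀ y ∈ Ioo (-1:ℝ) 1, HasDerivAt (FF p d) (f y - h y) y := by
    intro y hy
    exact FF_hasDerivAt y hp hdsq (by nlinarith [hy.1, hy.2])
  have hexp0 : (2 / (p - 1) + 1 : ℝ) ≠ 0 := by
    have : (0:ℝ) < 2 / (p - 1) := div_pos two_pos (by linarith)
    linarith
  have hFFcont : ContinuousOn (FF p d) (Icc (-1:ℝ) 1) := by
    unfold FF
    apply ContinuousOn.mul continuousOn_const
    apply ContinuousOn.mul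
    · exact ContinuousOn.rpow_const (by fun_prop)
        (fun x hx => Or.inr (by
          have : (0:ℝ) < 2 / (p - 1) := div_pos two_pos (by linarith)
          linarith))
    · exact ContinuousOn.rpow_const (by fun_prop)
        (fun x hx => Or.inl (upos' hdsq (sq_le_one' hx)).ne')
  have hFF1 : FF p d 1 = 0 := by
    unfold FF
    norm_num [Real.zero_rpow hexp0]
  have hFFm1 : FF p d (-1) = 0 := by
    unfold FF
    norm_num [Real.zero_rpow hexp0]
  have hzero : (∫ y in (-1:ℝ)..1, (f y - h y)) = 0 := by
    rw [intervalIntegral.integral_eq_sub_of_hasDerivAt_of_le (by norm_num) hFFcont hderivs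
      ((huIcc ▸ (hfcont.sub hhcont)).intervalIntegrable), hFF1, hFFm1, sub_zero]
  -- substitution : ∫ h = ∫ g
  have hphid : ∀ x ∈ uIcc (-1:ℝ) 1,
      HasDerivAt (fun y => (y + d) / (1 + d * y)) ((1 - d ^ 2) / (1 + d * x) ^ 2) x := by
    intro x hx
    rw [huIcc] at hx
    have hu := upos' hdsq (sq_le_one' hx)
    have h1 : HasDerivAt (fun y : ℝ => y + d) 1 x := (hasDerivAt_id x).add_const d
    have h2 : HasDerivAt (fun y : ℝ => 1 + d * y) d x := by
      simpa using ((hasDerivAt_id x).const_mul d).const_add 1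
    have hdiv := h1.div h2 hu.ne'
    refine hdiv.congr_deriv ?_
    ring
  have hphicont : ContinuousOn (fun x => (1 - d ^ 2) / (1 + d * x) ^ 2) (uIcc (-1:ℝ) 1) := by
    rw [huIcc]
    exact ContinuousOn.div continuousOn_const (by fun_prop)
      (fun y hy => pow_ne_zero _ (upos' hdsq (sq_le_one' hy)).ne')
  have hgcont : Continuous g := continuous_const.mul (rho_continuous hp)
  have hsub := intervalIntegral.integral_comp_smul_deriv hphid hphicont hgcont
  simp only [Function.comp, smul_eq_mul] at hsub
  rw [show ((-1:ℝ) + d) / (1 + d * (-1)) = -1 by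
        rw [div_eq_iff (by nlinarith)]; ring,
      show ((1:ℝ) + d) / (1 + d * 1) = 1 by
        rw [div_eq_iff (by nlinarith)]; ring] at hsub
  have hsub' : (∫ y in (-1:ℝ)..1, h y) = ∫ u in (-1:ℝ)..1, g u := hsub
  -- assemble
  have hio : ∀ F : ℝ → ℝ, (∫ y in Ioo (-1:ℝ) 1, F y) = ∫ y in (-1:ℝ)..1, F y := by
    intro F
    rw [intervalIntegral.integral_of_le (by norm_num : (-1:ℝ) ≤ 1),
      MeasureTheory.integral_Ioc_eq_integral_Ioo]
  have hsplit := intervalIntegral.integral_sub hfi hhi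
  calc (∫ y in Ioo (-1:ℝ) 1, f y) = ∫ y in (-1:ℝ)..1, f y := hio f
    _ = ∫ y in (-1:ℝ)..1, h y := by
        have : (∫ y in (-1:ℝ)..1, f y) - ∫ y in (-1:ℝ)..1, h y = 0 := by
          rw [← hsplit, hzero]
        linarith
    _ = ∫ u in (-1:ℝ)..1, g u := hsub'
    _ = ∫ y in Ioo (-1:ℝ) 1, g y := (hio g).symm
end

section
/- Let p > 1, let N ≥ 1 be an integer, let f : ℝ → ℝ and g : ℝ⁴ → ℝ be C¹ functions, and let r₀ > 0, T₀ > 0. Suppose u is a C² function on the domain D = {(r,t) : 0 < t < T₀, |r − r₀| < T₀ − t, r > 0} satisfying pointwise on D: ∂²_t u = ∂²_r u + ((N−1)/r) ∂_r u + |u|^{p−1}u + f(u) + g(r, t, ∂_r u, ∂_t u). Define w(y,s) = e^{−2s/(p−1)} u(r₀ + y e^{−s}, T₀ − e^{−s}). Then for all y ∈ (−1,1) and all s > max(−log T₀, −log r₀), w satisfies pointwise: ∂²_s w = (1/ρ(y)) ∂_y( ρ(y)(1−y²) ∂_y w ) − (2(p+1)/(p−1)²) w + |w|^{p−1}w − ((p+3)/(p−1))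 ∂_s w − 2y ∂²_{y s} w + e^{−s} ((N−1)/(r₀ + y e^{−s})) ∂_y w + e^{−2ps/(p−1)} f(e^{2s/(p−1)} w) + e^{−2ps/(p−1)} g( r₀ + y e^{−s}, T₀ − e^{−s}, e^{(p+1)s/(p−1)} ∂_y w, e^{(p+1)s/(p−1)} ( ∂_s w + y ∂_y w + (2/(p−1)) w ) ). -/
open MeasureTheory Real Set

/-- Equation (eqw) in similarity variables, with parameters `(r₀, T₀, N, f, g)`,
satisfied at the point `(y,s)` by the function `w`. -/
def SatisfiesEqw (p : ℝ) (N : ℕ) (f : ℝ → ℝ) (g : ℝ → ℝ → ℝ → ℝ → ℝ)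
    (r₀ T₀ : ℝ) (w : ℝ → ℝ → ℝ) (y s : ℝ) : Prop :=
  deriv (fun s' => deriv (fun s'' => w y s'') s') s =
    (1 / rho p y) *
        deriv (fun z => rho p z * (1 - z ^ 2) * deriv (fun z' => w z' s) z) y
      - (2 * (p + 1) / (p - 1) ^ 2) * w y s
      + |w y s| ^ (p - 1) * w y s
      - ((p + 3) / (p - 1)) * deriv (fun s' => w y s') s
      - 2 * y * deriv (fun z => deriv (fun s' => w z s') s) y
      + Real.exp (-s) * (((N : ℝ) - 1) / (r₀ + y * Real.exp (-s))) *
          deriv (fun z => w z s) y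
      + Real.exp (-2 * p * s / (p - 1)) * f (Real.exp (2 * s / (p - 1)) * w y s)
      + Real.exp (-2 * p * s / (p - 1)) *
          g (r₀ + y * Real.exp (-s)) (T₀ - Real.exp (-s))
            (Real.exp ((p + 1) * s / (p - 1)) * deriv (fun z => w z s) y)
            (Real.exp ((p + 1) * s / (p - 1)) *
              (deriv (fun s' => w y s') s + y * deriv (fun z => w z s) y
                + (2 / (p - 1)) * w y s))

private lemma lin2 (L : ℝ × ℝ →L[ℝ] ℝ) (a b : ℝ) :
    L (a, b) = a * L (1, 0) + b * L (0, 1) := by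
  have h : ((a, b) : ℝ × ℝ) = a • ((1 : ℝ), (0 : ℝ)) + b • ((0 : ℝ), (1 : ℝ)) := by
    simp [Prod.ext_iff]
  rw [h, map_add, L.map_smul, L.map_smul, smul_eq_mul, smul_eq_mul]

private lemma key_y {F : ℝ × ℝ → ℝ} {L : ℝ × ℝ →L[ℝ] ℝ} (r₀ T₀ y s : ℝ)
    (hF : HasFDerivAt F L (r₀ + y * Real.exp (-s), T₀ - Real.exp (-s))) :
    HasDerivAt (fun z => F (r₀ + z * Real.exp (-s), T₀ - Real.exp (-s)))
      (Real.exp (-s) * L (1, 0)) y := by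
  have h1 : HasDerivAt (fun z : ℝ => r₀ + z * Real.exp (-s)) (Real.exp (-s)) y := by
    simpa using ((hasDerivAt_id y).mul_const (Real.exp (-s))).const_add r₀
  have hp : HasDerivAt (fun z : ℝ => ((r₀ + z * Real.exp (-s), T₀ - Real.exp (-s)) : ℝ × ℝ))
      ((Real.exp (-s), 0)) y := h1.prodMk (hasDerivAt_const y _)
  exact (hF.comp_hasDerivAt y hp).congr_deriv (by rw [lin2]; ring)

private lemma key_s {F : ℝ × ℝ → ℝ} {L : ℝ × ℝ →L[ℝ] ℝ} (r₀ T₀ y s : ℝ)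
    (hF : HasFDerivAt F L (r₀ + y * Real.exp (-s), T₀ - Real.exp (-s))) :
    HasDerivAt (fun σ => F (r₀ + y * Real.exp (-σ), T₀ - Real.exp (-σ)))
      (-(y * Real.exp (-s)) * L (1, 0) + Real.exp (-s) * L (0, 1)) s := by
  have hE : HasDerivAt (fun σ : ℝ => Real.exp (-σ)) (-Real.exp (-s)) s := by
    simpa using ((hasDerivAt_id s).neg).exp
  have hp : HasDerivAt (fun σ : ℝ => ((r₀ + y * Real.exp (-σ), T₀ - Real.exp (-σ)) : ℝ × ℝ))
      ((y * -Real.exp (-s), -(-Real.exp (-s)))) s :=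
    ((hE.const_mul y).const_add r₀).prodMk (hE.const_sub T₀)
  exact (hF.comp_hasDerivAt s hp).congr_deriv (by rw [lin2]; ring)

set_option maxHeartbeats 2000000 in
/-- If `u` is a `C²` solution of the perturbed radial wave equation on the backward
light cone with vertex `(r₀,T₀)` (intersected with `{r > 0}`), then its similarity
variables version `w(y,s) = e^{-2s/(p-1)} u(r₀ + y e^{-s}, T₀ - e^{-s})`
satisfies equation (eqw) for `y ∈ (-1,1)` and `s > max(-log T₀, -log r₀)`. -/
theorem similarity_variables_equation
    (p : ℝ) (hp : 1 < p) (N : ℕ) (hN : 1 ≤ N)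
    (f : ℝ → ℝ) (g : ℝ → ℝ → ℝ → ℝ → ℝ)
    (hf : ContDiff ℝ 1 f)
    (hg : ContDiff ℝ 1 (fun x : ℝ × ℝ × ℝ × ℝ => g x.1 x.2.1 x.2.2.1 x.2.2.2))
    (r₀ T₀ : ℝ) (hr₀ : 0 < r₀) (hT₀ : 0 < T₀)
    (u : ℝ → ℝ → ℝ)
    (hu : ContDiffOn ℝ 2 (fun x : ℝ × ℝ => u x.1 x.2)
      {x : ℝ × ℝ | 0 < x.2 ∧ x.2 < T₀ ∧ |x.1 - r₀| < T₀ - x.2 ∧ 0 < x.1})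
    (hueq : ∀ r t : ℝ, 0 < t → t < T₀ → |r - r₀| < T₀ - t → 0 < r →
      deriv (fun t' => deriv (fun t'' => u r t'') t') t =
        deriv (fun r' => deriv (fun r'' => u r'' t) r') r
          + (((N : ℝ) - 1) / r) * deriv (fun r' => u r' t) r
          + |u r t| ^ (p - 1) * u r t
          + f (u r t)
          + g r t (deriv (fun r' => u r' t) r) (deriv (fun t' => u r t') t))
    (w : ℝ → ℝ → ℝ)
    (hw : ∀ y s : ℝ, w y s =
      Real.exp (-2 * s / (p - 1)) * u (r₀ + y * Real.exp (-s)) (T₀ - Real.exp (-s))) :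
    ∀ y ∈ Ioo (-1 : ℝ) 1, ∀ s : ℝ, max (-Real.log T₀) (-Real.log r₀) < s →
      SatisfiesEqw p N f g r₀ T₀ w y s := by
  set U : ℝ × ℝ → ℝ := fun x : ℝ × ℝ => u x.1 x.2 with hUdef
  set D : Set (ℝ × ℝ) := {x : ℝ × ℝ | 0 < x.2 ∧ x.2 < T₀ ∧ |x.1 - r₀| < T₀ - x.2 ∧ 0 < x.1}
    with hD
  have hOm : IsOpen D := by
    rw [hD]
    have h1 : IsOpen {x : ℝ × ℝ | 0 < x.2} := isOpen_lt continuous_const continuous_snd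
    have h2 : IsOpen {x : ℝ × ℝ | x.2 < T₀} := isOpen_lt continuous_snd continuous_const
    have h3 : IsOpen {x : ℝ × ℝ | |x.1 - r₀| < T₀ - x.2} :=
      isOpen_lt ((continuous_fst.sub continuous_const).abs)
        (continuous_const.sub continuous_snd)
    have h4 : IsOpen {x : ℝ × ℝ | 0 < x.1} := isOpen_lt continuous_const continuous_fst
    exact h1.inter (h2.inter (h3.inter h4))
  have hmem : ∀ z : ℝ, |z| < 1 → ∀ σ : ℝ, max (-Real.log T₀) (-Real.log r₀) < σ →
      ((r₀ + z * Real.exp (-σ), T₀ - Real.exp (-σ)) : ℝ × ℝ) ∈ D := by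
    intro z hz σ hσ
    have he0 : 0 < Real.exp (-σ) := Real.exp_pos _
    have heT : Real.exp (-σ) < T₀ := by
      have h1 : -Real.log T₀ < σ := lt_of_le_of_lt (le_max_left _ _) hσ
      have h2 := Real.exp_lt_exp.2 (show -σ < Real.log T₀ by linarith)
      rwa [Real.exp_log hT₀] at h2
    have her : Real.exp (-σ) < r₀ := by
      have h1 : -Real.log r₀ < σ := lt_of_le_of_lt (le_max_right _ _) hσ
      have h2 := Real.exp_lt_exp.2 (show -σ < Real.log r₀ by linarith)
      rwa [Real.exp_log hr₀] at h2
    have habs : |r₀ + z * Real.exp (-σ) - r₀| = |z| * Real.exp (-σ) := by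
      rw [add_sub_cancel_left, abs_mul, abs_of_pos he0]
    rw [hD]
    exact ⟨show 0 < T₀ - Real.exp (-σ) by linarith,
      show T₀ - Real.exp (-σ) < T₀ by linarith,
      show |r₀ + z * Real.exp (-σ) - r₀| < T₀ - (T₀ - Real.exp (-σ)) by
        rw [habs]; nlinarith [mul_lt_mul_of_pos_right hz he0],
      show 0 < r₀ + z * Real.exp (-σ) by
        nlinarith [mul_le_mul_of_nonneg_right (neg_abs_le z) he0.le,
          mul_lt_mul_of_pos_right hz he0]⟩
  -- basic differentiability facts for U on D
  have hCA : ∀ x ∈ D, ContDiffAt ℝ 2 U x := fun x hx => hu.contDiffAt (hOm.mem_nhds hx)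
  have hUd : ∀ x ∈ D, HasFDerivAt U (fderiv ℝ U x) x :=
    fun x hx => ((hCA x hx).differentiableAt (by norm_num)).hasFDerivAt
  have hU'd : ∀ x ∈ D, HasFDerivAt (fderiv ℝ U) (fderiv ℝ (fderiv ℝ U) x) x :=
    fun x hx => (((hCA x hx).fderiv_right (m := 1) (by norm_num)).differentiableAt (by norm_num)).hasFDerivAt
  have hu1d : ∀ x ∈ D, HasFDerivAt (fun x' => fderiv ℝ U x' (1, 0))
      ((ContinuousLinearMap.apply ℝ ℝ ((1 : ℝ), (0 : ℝ))).comp (fderiv ℝ (fderiv ℝ U) x)) x :=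
    fun x hx =>
      (ContinuousLinearMap.apply ℝ ℝ ((1 : ℝ), (0 : ℝ))).hasFDerivAt.comp x (hU'd x hx)
  have hu2d : ∀ x ∈ D, HasFDerivAt (fun x' => fderiv ℝ U x' (0, 1))
      ((ContinuousLinearMap.apply ℝ ℝ ((0 : ℝ), (1 : ℝ))).comp (fderiv ℝ (fderiv ℝ U) x)) x :=
    fun x hx =>
      (ContinuousLinearMap.apply ℝ ℝ ((0 : ℝ), (1 : ℝ))).hasFDerivAt.comp x (hU'd x hx)
  -- slice derivatives of u
  have hsl1 : ∀ a b : ℝ, (a, b) ∈ D →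
      HasDerivAt (fun r' => u r' b) (fderiv ℝ U (a, b) (1, 0)) a := by
    intro a b h
    exact (hUd (a, b) h).comp_hasDerivAt a
      ((hasDerivAt_id a).prodMk (hasDerivAt_const a b))
  have hsl2 : ∀ a b : ℝ, (a, b) ∈ D →
      HasDerivAt (fun t' => u a t') (fderiv ℝ U (a, b) (0, 1)) b := by
    intro a b h
    exact (hUd (a, b) h).comp_hasDerivAt b
      ((hasDerivAt_const b a).prodMk (hasDerivAt_id b))
  -- derivatives of w
  have hWy : ∀ z : ℝ, |z| < 1 → ∀ σ : ℝ, max (-Real.log T₀) (-Real.log r₀) < σ →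
      HasDerivAt (fun z' => w z' σ)
        (Real.exp (-2 * σ / (p - 1)) * (Real.exp (-σ) *
          fderiv ℝ U (r₀ + z * Real.exp (-σ), T₀ - Real.exp (-σ)) (1, 0))) z := by
    intro z hz σ hσ
    have hfun : (fun z' => w z' σ) = fun z' =>
        Real.exp (-2 * σ / (p - 1)) * U (r₀ + z' * Real.exp (-σ), T₀ - Real.exp (-σ)) := by
      funext z'; exact hw z' σ
    rw [hfun]
    exact HasDerivAt.const_mul _ (key_y r₀ T₀ z σ (hUd _ (hmem z hz σ hσ)))
  have hWs : ∀ z : ℝ, |z| < 1 → ∀ σ : ℝ, max (-Real.log T₀) (-Real.log r₀) < σ →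
      HasDerivAt (fun σ' => w z σ')
        (Real.exp (-2 * σ / (p - 1)) * (-2 / (p - 1)) *
            U (r₀ + z * Real.exp (-σ), T₀ - Real.exp (-σ))
          + Real.exp (-2 * σ / (p - 1)) *
            (-(z * Real.exp (-σ)) *
                fderiv ℝ U (r₀ + z * Real.exp (-σ), T₀ - Real.exp (-σ)) (1, 0)
              + Real.exp (-σ) *
                fderiv ℝ U (r₀ + z * Real.exp (-σ), T₀ - Real.exp (-σ)) (0, 1))) σ := by
    intro z hz σ hσ
    have hfun : (fun σ' => w z σ') = fun σ' =>
        Real.exp (-2 * σ' / (p - 1)) * U (r₀ + z * Real.exp (-σ'), T₀ - Real.exp (-σ')) := by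
      funext σ'; exact hw z σ'
    rw [hfun]
    have hA : HasDerivAt (fun σ' : ℝ => Real.exp (-2 * σ' / (p - 1)))
        (Real.exp (-2 * σ / (p - 1)) * (-2 / (p - 1))) σ := by
      have h0 : HasDerivAt (fun σ' : ℝ => -2 * σ' / (p - 1)) (-2 / (p - 1)) σ := by
        simpa using (((hasDerivAt_id σ).const_mul (-2 : ℝ)).div_const (p - 1))
      exact h0.exp
    exact (hA.mul (key_s r₀ T₀ z σ (hUd _ (hmem z hz σ hσ)))).congr_deriv
      (by simp only []; try ring)
  intro y hy s hs
  obtain ⟨hy1, hy2⟩ := hy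
  have hyabs : |y| < 1 := abs_lt.2 ⟨hy1, hy2⟩
  have hp0 : (0 : ℝ) < p - 1 := by linarith
  have hp1 : p - 1 ≠ 0 := ne_of_gt hp0
  have hXD : ((r₀ + y * Real.exp (-s), T₀ - Real.exp (-s)) : ℝ × ℝ) ∈ D := hmem y hyabs s hs
  have hXD' : (0 < T₀ - Real.exp (-s) ∧ T₀ - Real.exp (-s) < T₀ ∧
      |r₀ + y * Real.exp (-s) - r₀| < T₀ - (T₀ - Real.exp (-s)) ∧ 0 < r₀ + y * Real.exp (-s)) := by
    have h := hXD; rw [hD] at h; exact h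
  obtain ⟨hc1, hc2, hc3, hc4⟩ := hXD'
  have hrne : r₀ + y * Real.exp (-s) ≠ 0 := ne_of_gt hc4
  -- first derivatives at the point
  have hDyEq : deriv (fun z => w z s) y = Real.exp (-2 * s / (p - 1)) * (Real.exp (-s) * fderiv ℝ U (r₀ + y * Real.exp (-s), T₀ - Real.exp (-s)) (1, 0)) := (hWy y hyabs s hs).deriv
  have hDsEq : deriv (fun s' => w y s') s =
      Real.exp (-2 * s / (p - 1)) * (-2 / (p - 1)) * U (r₀ + y * Real.exp (-s), T₀ - Real.exp (-s)) + Real.exp (-2 * s / (p - 1)) * (-(y * Real.exp (-s)) * fderiv ℝ U (r₀ + y * Real.exp (-s), T₀ - Real.exp (-s)) (1, 0) + Real.exp (-s) * fderiv ℝ U (r₀ + y * Real.exp (-s), T₀ - Real.exp (-s)) (0, 1)) :=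
    (hWs y hyabs s hs).deriv
  -- pieces for second derivatives
  have hA_s : HasDerivAt (fun σ' : ℝ => Real.exp (-2 * σ' / (p - 1)))
      (Real.exp (-2 * s / (p - 1)) * (-2 / (p - 1))) s := by
    have h0 : HasDerivAt (fun σ' : ℝ => -2 * σ' / (p - 1)) (-2 / (p - 1)) s := by
      simpa using (((hasDerivAt_id s).const_mul (-2 : ℝ)).div_const (p - 1))
    exact h0.exp
  have hE : HasDerivAt (fun σ : ℝ => Real.exp (-σ)) (-Real.exp (-s)) s := by
    simpa using ((hasDerivAt_id s).neg).exp
  have hVs : HasDerivAt (fun σ => U (r₀ + y * Real.exp (-σ), T₀ - Real.exp (-σ)))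
      (-(y * Real.exp (-s)) * fderiv ℝ U (r₀ + y * Real.exp (-s), T₀ - Real.exp (-s)) (1, 0) + Real.exp (-s) * fderiv ℝ U (r₀ + y * Real.exp (-s), T₀ - Real.exp (-s)) (0, 1)) s := key_s r₀ T₀ y s (hUd _ hXD)
  have hVy : HasDerivAt (fun z => U (r₀ + z * Real.exp (-s), T₀ - Real.exp (-s))) (Real.exp (-s) * fderiv ℝ U (r₀ + y * Real.exp (-s), T₀ - Real.exp (-s)) (1, 0)) y :=
    key_y r₀ T₀ y s (hUd _ hXD)
  have hv1s := key_s r₀ T₀ y s (hu1d _ hXD)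
  have hv2s := key_s r₀ T₀ y s (hu2d _ hXD)
  have hv1y := key_y r₀ T₀ y s (hu1d _ hXD)
  have hv2y := key_y r₀ T₀ y s (hu2d _ hXD)
  -- second derivative in s
  have hev_s : (fun s' => deriv (fun s'' => w y s'') s') =ᶠ[nhds s]
      (fun s' => Real.exp (-2 * s' / (p - 1)) * (-2 / (p - 1)) *
          U (r₀ + y * Real.exp (-s'), T₀ - Real.exp (-s'))
        + Real.exp (-2 * s' / (p - 1)) *
          (-(y * Real.exp (-s')) *
              fderiv ℝ U (r₀ + y * Real.exp (-s'), T₀ - Real.exp (-s')) (1, 0)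
            + Real.exp (-s') *
              fderiv ℝ U (r₀ + y * Real.exp (-s'), T₀ - Real.exp (-s')) (0, 1))) :=
    Filter.eventually_of_mem (Ioi_mem_nhds hs) (fun σ hσ => (hWs y hyabs σ hσ).deriv)
  have hG : HasDerivAt
      (fun s' => Real.exp (-2 * s' / (p - 1)) * (-2 / (p - 1)) *
          U (r₀ + y * Real.exp (-s'), T₀ - Real.exp (-s'))
        + Real.exp (-2 * s' / (p - 1)) *
          (-(y * Real.exp (-s')) *
              fderiv ℝ U (r₀ + y * Real.exp (-s'), T₀ - Real.exp (-s')) (1, 0)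
            + Real.exp (-s') *
              fderiv ℝ U (r₀ + y * Real.exp (-s'), T₀ - Real.exp (-s')) (0, 1)))
      (Real.exp (-2 * s / (p - 1)) * (-2 / (p - 1)) * (-2 / (p - 1)) * U (r₀ + y * Real.exp (-s), T₀ - Real.exp (-s))
        + 2 * (Real.exp (-2 * s / (p - 1)) * (-2 / (p - 1)) * (-(y * Real.exp (-s)) * fderiv ℝ U (r₀ + y * Real.exp (-s), T₀ - Real.exp (-s)) (1, 0) + Real.exp (-s) * fderiv ℝ U (r₀ + y * Real.exp (-s), T₀ - Real.exp (-s)) (0, 1)))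
        + Real.exp (-2 * s / (p - 1)) * ((y * Real.exp (-s)) * fderiv ℝ U (r₀ + y * Real.exp (-s), T₀ - Real.exp (-s)) (1, 0)
            + (y * Real.exp (-s)) * ((y * Real.exp (-s)) * fderiv ℝ (fderiv ℝ U) (r₀ + y * Real.exp (-s), T₀ - Real.exp (-s)) (1, 0) (1, 0) - Real.exp (-s) * fderiv ℝ (fderiv ℝ U) (r₀ + y * Real.exp (-s), T₀ - Real.exp (-s)) (0, 1) (1, 0))
            - Real.exp (-s) * fderiv ℝ U (r₀ + y * Real.exp (-s), T₀ - Real.exp (-s)) (0, 1) + Real.exp (-s) * (-(y * Real.exp (-s)) * fderiv ℝ (fderiv ℝ U) (r₀ + y * Real.exp (-s), T₀ - Real.exp (-s)) (1, 0) (0, 1) + Real.exp (-s) * fderiv ℝ (fderiv ℝ U) (r₀ + y * Real.exp (-s), T₀ - Real.exp (-s)) (0, 1) (0, 1)))) s := by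
    have h := ((hA_s.mul_const (-2 / (p - 1))).mul hVs).add
      (hA_s.mul ((((hE.const_mul y).neg).mul hv1s).add (hE.mul hv2s)))
    exact h.congr_deriv (by
      simp only [ContinuousLinearMap.comp_apply, ContinuousLinearMap.apply_apply, Pi.neg_apply, Pi.mul_apply, Pi.add_apply]
      try ring)
  have hDssEq : deriv (fun s' => deriv (fun s'' => w y s'') s') s =
      Real.exp (-2 * s / (p - 1)) * (-2 / (p - 1)) * (-2 / (p - 1)) * U (r₀ + y * Real.exp (-s), T₀ - Real.exp (-s))
        + 2 * (Real.exp (-2 * s / (p - 1)) * (-2 / (p - 1)) * (-(y * Real.exp (-s)) * fderiv ℝ U (r₀ + y * Real.exp (-s), T₀ - Real.exp (-s)) (1, 0) + Real.exp (-s) * fderiv ℝ U (r₀ + y * Real.exp (-s), T₀ - Real.exp (-s)) (0, 1)))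
        + Real.exp (-2 * s / (p - 1)) * ((y * Real.exp (-s)) * fderiv ℝ U (r₀ + y * Real.exp (-s), T₀ - Real.exp (-s)) (1, 0)
            + (y * Real.exp (-s)) * ((y * Real.exp (-s)) * fderiv ℝ (fderiv ℝ U) (r₀ + y * Real.exp (-s), T₀ - Real.exp (-s)) (1, 0) (1, 0) - Real.exp (-s) * fderiv ℝ (fderiv ℝ U) (r₀ + y * Real.exp (-s), T₀ - Real.exp (-s)) (0, 1) (1, 0))
            - Real.exp (-s) * fderiv ℝ U (r₀ + y * Real.exp (-s), T₀ - Real.exp (-s)) (0, 1) + Real.exp (-s) * (-(y * Real.exp (-s)) * fderiv ℝ (fderiv ℝ U) (r₀ + y * Real.exp (-s), T₀ - Real.exp (-s)) (1, 0) (0, 1) + Real.exp (-s) * fderiv ℝ (fderiv ℝ U) (r₀ + y * Real.exp (-s), T₀ - Real.exp (-s)) (0, 1) (0, 1))) :=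
    (hev_s.deriv_eq).trans hG.deriv
  -- mixed second derivative
  have hev_y : (fun z => deriv (fun s' => w z s') s) =ᶠ[nhds y]
      (fun z => Real.exp (-2 * s / (p - 1)) * (-2 / (p - 1)) * U (r₀ + z * Real.exp (-s), T₀ - Real.exp (-s))
        + Real.exp (-2 * s / (p - 1)) * (-(z * Real.exp (-s)) * fderiv ℝ U (r₀ + z * Real.exp (-s), T₀ - Real.exp (-s)) (1, 0)
          + Real.exp (-s) * fderiv ℝ U (r₀ + z * Real.exp (-s), T₀ - Real.exp (-s)) (0, 1))) :=
    Filter.eventually_of_mem (isOpen_Ioo.mem_nhds ⟨hy1, hy2⟩)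
      (fun z hz => (hWs z (abs_lt.2 ⟨hz.1, hz.2⟩) s hs).deriv)
  have hzE : HasDerivAt (fun z : ℝ => -(z * Real.exp (-s))) (-(1 * Real.exp (-s))) y :=
    ((hasDerivAt_id y).mul_const (Real.exp (-s))).neg
  have hH : HasDerivAt
      (fun z => Real.exp (-2 * s / (p - 1)) * (-2 / (p - 1)) * U (r₀ + z * Real.exp (-s), T₀ - Real.exp (-s))
        + Real.exp (-2 * s / (p - 1)) * (-(z * Real.exp (-s)) * fderiv ℝ U (r₀ + z * Real.exp (-s), T₀ - Real.exp (-s)) (1, 0)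
          + Real.exp (-s) * fderiv ℝ U (r₀ + z * Real.exp (-s), T₀ - Real.exp (-s)) (0, 1)))
      (Real.exp (-2 * s / (p - 1)) * (-2 / (p - 1)) * (Real.exp (-s) * fderiv ℝ U (r₀ + y * Real.exp (-s), T₀ - Real.exp (-s)) (1, 0))
        + Real.exp (-2 * s / (p - 1)) * (-(Real.exp (-s)) * fderiv ℝ U (r₀ + y * Real.exp (-s), T₀ - Real.exp (-s)) (1, 0) + -(y * Real.exp (-s)) * (Real.exp (-s) * fderiv ℝ (fderiv ℝ U) (r₀ + y * Real.exp (-s), T₀ - Real.exp (-s)) (1, 0) (1, 0)) + Real.exp (-s) * (Real.exp (-s) * fderiv ℝ (fderiv ℝ U) (r₀ + y * Real.exp (-s), T₀ - Real.exp (-s)) (1, 0) (0, 1)))) y := by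
    have h := (HasDerivAt.const_mul (Real.exp (-2 * s / (p - 1)) * (-2 / (p - 1))) hVy).add
      (HasDerivAt.const_mul (Real.exp (-2 * s / (p - 1)))
        ((hzE.mul hv1y).add (HasDerivAt.const_mul (Real.exp (-s)) hv2y)))
    exact h.congr_deriv (by
      simp only [ContinuousLinearMap.comp_apply, ContinuousLinearMap.apply_apply]
      try ring)
  have hDysEq : deriv (fun z => deriv (fun s' => w z s') s) y =
      Real.exp (-2 * s / (p - 1)) * (-2 / (p - 1)) * (Real.exp (-s) * fderiv ℝ U (r₀ + y * Real.exp (-s), T₀ - Real.exp (-s)) (1, 0))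
        + Real.exp (-2 * s / (p - 1)) * (-(Real.exp (-s)) * fderiv ℝ U (r₀ + y * Real.exp (-s), T₀ - Real.exp (-s)) (1, 0) + -(y * Real.exp (-s)) * (Real.exp (-s) * fderiv ℝ (fderiv ℝ U) (r₀ + y * Real.exp (-s), T₀ - Real.exp (-s)) (1, 0) (1, 0)) + Real.exp (-s) * (Real.exp (-s) * fderiv ℝ (fderiv ℝ U) (r₀ + y * Real.exp (-s), T₀ - Real.exp (-s)) (1, 0) (0, 1))) :=
    (hev_y.deriv_eq).trans hH.deriv
  -- the rho term
  have h1y2 : (0 : ℝ) < 1 - y ^ 2 := by nlinarith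
  have hev_r : (fun z => rho p z * (1 - z ^ 2) * deriv (fun z' => w z' s) z) =ᶠ[nhds y]
      (fun z => (1 - z ^ 2) ^ (2 / (p - 1) + 1) *
        (Real.exp (-2 * s / (p - 1)) * (Real.exp (-s) * fderiv ℝ U (r₀ + z * Real.exp (-s), T₀ - Real.exp (-s)) (1, 0)))) := by
    refine Filter.eventually_of_mem (isOpen_Ioo.mem_nhds ⟨hy1, hy2⟩) (fun z hz => ?_)
    have hz2 : (0 : ℝ) < 1 - z ^ 2 := by
      obtain ⟨hza, hzb⟩ := hz
      nlinarith
    simp only []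
    rw [(hWy z (abs_lt.2 ⟨hz.1, hz.2⟩) s hs).deriv]
    simp only [rho]
    rw [Real.rpow_add_one (ne_of_gt hz2)]
  have hpow : HasDerivAt (fun z : ℝ => (1 - z ^ 2) ^ (2 / (p - 1) + 1))
      (-(2 * y ^ (2 - 1)) * (2 / (p - 1) + 1) * (1 - y ^ 2) ^ (2 / (p - 1) + 1 - 1)) y := by
    have hb : HasDerivAt (fun z : ℝ => 1 - z ^ 2) (-((2 : ℕ) * y ^ (2 - 1))) y :=
      (hasDerivAt_pow 2 y).const_sub 1
    have h := hb.rpow_const (p := 2 / (p - 1) + 1) (Or.inl (ne_of_gt h1y2))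
    exact h.congr_deriv (by push_cast; ring)
  have hK : HasDerivAt
      (fun z => (1 - z ^ 2) ^ (2 / (p - 1) + 1) *
        (Real.exp (-2 * s / (p - 1)) * (Real.exp (-s) * fderiv ℝ U (r₀ + z * Real.exp (-s), T₀ - Real.exp (-s)) (1, 0))))
      (-(2 * y ^ (2 - 1)) * (2 / (p - 1) + 1) * (1 - y ^ 2) ^ (2 / (p - 1) + 1 - 1) *
          (Real.exp (-2 * s / (p - 1)) * (Real.exp (-s) * fderiv ℝ U (r₀ + y * Real.exp (-s), T₀ - Real.exp (-s)) (1, 0)))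
        + (1 - y ^ 2) ^ (2 / (p - 1) + 1) * (Real.exp (-2 * s / (p - 1)) * (Real.exp (-s) * (Real.exp (-s) * fderiv ℝ (fderiv ℝ U) (r₀ + y * Real.exp (-s), T₀ - Real.exp (-s)) (1, 0) (1, 0))))) y := by
    have h := hpow.mul
      (HasDerivAt.const_mul (Real.exp (-2 * s / (p - 1))) (HasDerivAt.const_mul (Real.exp (-s)) hv1y))
    exact h.congr_deriv (by
      simp only [ContinuousLinearMap.comp_apply, ContinuousLinearMap.apply_apply]
      try ring)
  have hRhoEq : 1 / rho p y *
      deriv (fun z => rho p z * (1 - z ^ 2) * deriv (fun z' => w z' s) z) y =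
      -(2 * y) * (2 / (p - 1) + 1) * (Real.exp (-2 * s / (p - 1)) * (Real.exp (-s) * fderiv ℝ U (r₀ + y * Real.exp (-s), T₀ - Real.exp (-s)) (1, 0)))
        + (1 - y ^ 2) * (Real.exp (-2 * s / (p - 1)) * (Real.exp (-s) * (Real.exp (-s) * fderiv ℝ (fderiv ℝ U) (r₀ + y * Real.exp (-s), T₀ - Real.exp (-s)) (1, 0) (1, 0)))) := by
    rw [hev_r.deriv_eq, hK.deriv]
    have e1 : 2 / (p - 1) + 1 - 1 = 2 / (p - 1) := by ring
    have e2 : (1 - y ^ 2) ^ (2 / (p - 1) + 1) =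
        (1 - y ^ 2) ^ (2 / (p - 1)) * (1 - y ^ 2) :=
      Real.rpow_add_one (ne_of_gt h1y2) _
    have hrpos : (0 : ℝ) < (1 - y ^ 2) ^ (2 / (p - 1)) := Real.rpow_pos_of_pos h1y2 _
    rw [show rho p y = (1 - y ^ 2) ^ (2 / (p - 1)) from rfl, e1, e2]
    norm_num
    field_simp
  -- symmetry of second derivatives
  have hsymm : fderiv ℝ (fderiv ℝ U) (r₀ + y * Real.exp (-s), T₀ - Real.exp (-s)) (0, 1) (1, 0) = fderiv ℝ (fderiv ℝ U) (r₀ + y * Real.exp (-s), T₀ - Real.exp (-s)) (1, 0) (0, 1) :=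
    second_derivative_symmetric_of_eventually
      (Filter.eventually_of_mem (hOm.mem_nhds hXD) (fun z hz => hUd z hz))
      (hU'd _ hXD) _ _
  -- the PDE at the point
  have htt : deriv (fun t' => deriv (fun t'' => u (r₀ + y * Real.exp (-s)) t'') t') (T₀ - Real.exp (-s))
      = fderiv ℝ (fderiv ℝ U) (r₀ + y * Real.exp (-s), T₀ - Real.exp (-s)) (0, 1) (0, 1) := by
    have hopen : IsOpen ((fun t' : ℝ => ((r₀ + y * Real.exp (-s) : ℝ), t')) ⁻¹' D) :=
      hOm.preimage (Continuous.prodMk_right _)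
    have hevt : (fun t' => deriv (fun t'' => u (r₀ + y * Real.exp (-s)) t'') t') =ᶠ[nhds (T₀ - Real.exp (-s))]
        (fun t' => fderiv ℝ U (r₀ + y * Real.exp (-s), t') (0, 1)) :=
      Filter.eventually_of_mem (hopen.mem_nhds hXD) (fun t' ht' => (hsl2 _ _ ht').deriv)
    have hout : HasDerivAt (fun t' => fderiv ℝ U (r₀ + y * Real.exp (-s), t') (0, 1)) (fderiv ℝ (fderiv ℝ U) (r₀ + y * Real.exp (-s), T₀ - Real.exp (-s)) (0, 1) (0, 1))
        (T₀ - Real.exp (-s)) := by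
      have h := (hu2d _ hXD).comp_hasDerivAt (T₀ - Real.exp (-s))
        ((hasDerivAt_const (T₀ - Real.exp (-s)) (r₀ + y * Real.exp (-s))).prodMk (hasDerivAt_id (T₀ - Real.exp (-s))))
      exact h.congr_deriv (by
        simp only [ContinuousLinearMap.comp_apply, ContinuousLinearMap.apply_apply])
    exact (hevt.deriv_eq).trans hout.deriv
  have hrr : deriv (fun r' => deriv (fun r'' => u r'' (T₀ - Real.exp (-s))) r') (r₀ + y * Real.exp (-s))
      = fderiv ℝ (fderiv ℝ U) (r₀ + y * Real.exp (-s), T₀ - Real.exp (-s)) (1, 0) (1, 0) := by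
    have hopen : IsOpen ((fun r' : ℝ => ((r' : ℝ), (T₀ - Real.exp (-s) : ℝ))) ⁻¹' D) :=
      hOm.preimage (continuous_id.prodMk continuous_const)
    have hevr : (fun r' => deriv (fun r'' => u r'' (T₀ - Real.exp (-s))) r') =ᶠ[nhds (r₀ + y * Real.exp (-s))]
        (fun r' => fderiv ℝ U (r', T₀ - Real.exp (-s)) (1, 0)) :=
      Filter.eventually_of_mem (hopen.mem_nhds hXD) (fun r' hr' => (hsl1 _ _ hr').deriv)
    have hout : HasDerivAt (fun r' => fderiv ℝ U (r', T₀ - Real.exp (-s)) (1, 0)) (fderiv ℝ (fderiv ℝ U) (r₀ + y * Real.exp (-s), T₀ - Real.exp (-s)) (1, 0) (1, 0))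
        (r₀ + y * Real.exp (-s)) := by
      have h := (hu1d _ hXD).comp_hasDerivAt (r₀ + y * Real.exp (-s))
        ((hasDerivAt_id (r₀ + y * Real.exp (-s))).prodMk (hasDerivAt_const (r₀ + y * Real.exp (-s)) (T₀ - Real.exp (-s))))
      exact h.congr_deriv (by
        simp only [ContinuousLinearMap.comp_apply, ContinuousLinearMap.apply_apply])
    exact (hevr.deriv_eq).trans hout.deriv
  have hr1 : deriv (fun r' => u r' (T₀ - Real.exp (-s))) (r₀ + y * Real.exp (-s)) = fderiv ℝ U (r₀ + y * Real.exp (-s), T₀ - Real.exp (-s)) (1, 0) :=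
    (hsl1 _ _ hXD).deriv
  have ht1 : deriv (fun t' => u (r₀ + y * Real.exp (-s)) t') (T₀ - Real.exp (-s)) = fderiv ℝ U (r₀ + y * Real.exp (-s), T₀ - Real.exp (-s)) (0, 1) :=
    (hsl2 _ _ hXD).deriv
  have hPDE : fderiv ℝ (fderiv ℝ U) (r₀ + y * Real.exp (-s), T₀ - Real.exp (-s)) (0, 1) (0, 1) = fderiv ℝ (fderiv ℝ U) (r₀ + y * Real.exp (-s), T₀ - Real.exp (-s)) (1, 0) (1, 0) + (((N : ℝ) - 1) / (r₀ + y * Real.exp (-s))) * fderiv ℝ U (r₀ + y * Real.exp (-s), T₀ - Real.exp (-s)) (1, 0)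
      + |U (r₀ + y * Real.exp (-s), T₀ - Real.exp (-s))| ^ (p - 1) * U (r₀ + y * Real.exp (-s), T₀ - Real.exp (-s)) + f (U (r₀ + y * Real.exp (-s), T₀ - Real.exp (-s)))
      + g (r₀ + y * Real.exp (-s)) (T₀ - Real.exp (-s)) (fderiv ℝ U (r₀ + y * Real.exp (-s), T₀ - Real.exp (-s)) (1, 0)) (fderiv ℝ U (r₀ + y * Real.exp (-s), T₀ - Real.exp (-s)) (0, 1)) := by
    have h := hueq (r₀ + y * Real.exp (-s)) (T₀ - Real.exp (-s)) hc1 hc2 hc3 hc4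
    rw [htt, hrr, hr1, ht1] at h
    exact h
  -- values and exponential identities
  have hwval : w y s = Real.exp (-2 * s / (p - 1)) * U (r₀ + y * Real.exp (-s), T₀ - Real.exp (-s)) := hw y s
  have hone3 : Real.exp ((p + 1) * s / (p - 1)) * (Real.exp (-2 * s / (p - 1)) * Real.exp (-s)) = 1 := by
    rw [← Real.exp_add, ← Real.exp_add,
      show (p + 1) * s / (p - 1) + (-2 * s / (p - 1) + -s) = 0 by field_simp; ring]
    exact Real.exp_zero
  have hfarg : Real.exp (2 * s / (p - 1)) * w y s = U (r₀ + y * Real.exp (-s), T₀ - Real.exp (-s)) := by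
    rw [hwval, ← mul_assoc, ← Real.exp_add,
      show 2 * s / (p - 1) + -2 * s / (p - 1) = 0 by ring, Real.exp_zero, one_mul]
  have hg3 : Real.exp ((p + 1) * s / (p - 1)) * deriv (fun z => w z s) y = fderiv ℝ U (r₀ + y * Real.exp (-s), T₀ - Real.exp (-s)) (1, 0) := by
    rw [hDyEq, show Real.exp ((p + 1) * s / (p - 1)) * (Real.exp (-2 * s / (p - 1)) * (Real.exp (-s) * fderiv ℝ U (r₀ + y * Real.exp (-s), T₀ - Real.exp (-s)) (1, 0))) =
      Real.exp ((p + 1) * s / (p - 1)) * (Real.exp (-2 * s / (p - 1)) * Real.exp (-s)) * fderiv ℝ U (r₀ + y * Real.exp (-s), T₀ - Real.exp (-s)) (1, 0) by ring, hone3, one_mul]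
  have hg4 : Real.exp ((p + 1) * s / (p - 1)) *
      (deriv (fun s' => w y s') s + y * deriv (fun z => w z s) y
        + (2 / (p - 1)) * w y s) = fderiv ℝ U (r₀ + y * Real.exp (-s), T₀ - Real.exp (-s)) (0, 1) := by
    have hsum : deriv (fun s' => w y s') s + y * deriv (fun z => w z s) y
        + (2 / (p - 1)) * w y s = Real.exp (-2 * s / (p - 1)) * Real.exp (-s) * fderiv ℝ U (r₀ + y * Real.exp (-s), T₀ - Real.exp (-s)) (0, 1) := by
      rw [hDsEq, hDyEq, hwval]; ring
    rw [hsum, show Real.exp ((p + 1) * s / (p - 1)) * (Real.exp (-2 * s / (p - 1)) * Real.exp (-s) * fderiv ℝ U (r₀ + y * Real.exp (-s), T₀ - Real.exp (-s)) (0, 1)) =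
      Real.exp ((p + 1) * s / (p - 1)) * (Real.exp (-2 * s / (p - 1)) * Real.exp (-s)) * fderiv ℝ U (r₀ + y * Real.exp (-s), T₀ - Real.exp (-s)) (0, 1) by ring, hone3, one_mul]
  have hep : Real.exp (-2 * p * s / (p - 1)) = Real.exp (-2 * s / (p - 1)) * Real.exp (-s) * Real.exp (-s) := by
    rw [← Real.exp_add, ← Real.exp_add]
    congr 1
    field_simp
    ring
  have habs2 : |w y s| ^ (p - 1) * w y s = Real.exp (-2 * s / (p - 1)) * Real.exp (-s) * Real.exp (-s) * (|U (r₀ + y * Real.exp (-s), T₀ - Real.exp (-s))| ^ (p - 1) * U (r₀ + y * Real.exp (-s), T₀ - Real.exp (-s))) := by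
    rw [hwval, abs_mul, abs_of_pos (Real.exp_pos _),
      Real.mul_rpow (Real.exp_pos _).le (abs_nonneg _),
      show (Real.exp (-2 * s / (p - 1)) : ℝ) ^ (p - 1) = Real.exp (-2 * s / (p - 1) * (p - 1)) from
        (Real.exp_mul _ _).symm,
      show -2 * s / (p - 1) * (p - 1) = -s + -s by field_simp; ring,
      Real.exp_add]
    ring
  -- assemble
  simp only [SatisfiesEqw]
  rw [hg4, hg3, hfarg, habs2, hDssEq, hRhoEq, hDsEq, hDysEq, hDyEq, hep, hwval,
    hPDE, hsymm]
  field_simp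
  ring
end

section
/- Let p > 1, M > 0, 0 ≤ q < p, let f : ℝ → ℝ be continuous with |f(u)| ≤ M(1+|u|^q) for all u, and set F(u) = ∫₀^u f(v) dv. Then there exists C = C(p,M,q) > 0 such that for all s ≥ 0 and every measurable function w : (−1,1) → ℝ: e^{−2(p+1)s/(p−1)} ∫_{−1}^{1} |F(e^{2s/(p−1)} w(y))| ρ(y) dy + e^{−2ps/(p−1)} ∫_{−1}^{1} |f(e^{2s/(p−1)} w(y)) · w(y)| ρ(y) dy ≤ C e^{−2(p−q)s/(p−1)} ( 1 + ∫_{−1}^{1} |w(y)|^{p+1} ρ(y) dy ). -/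
open MeasureTheory Real Set

/-- The antiderivative `F(u) = ∫₀^u f(v) dv`. -/
noncomputable def Fant (f : ℝ → ℝ) (u : ℝ) : ℝ := ∫ v in (0 : ℝ)..u, f v

-- auxiliary lemmas
-- helper: x^r ≤ 1 + x^t for 0 ≤ r ≤ t, x ≥ 0
lemma rpow_le_one_add (x r t : ℝ) (hx : 0 ≤ x) (hr : 0 ≤ r) (hrt : r ≤ t) :
    x ^ r ≤ 1 + x ^ t := by
  rcases le_or_gt x 1 with h | h
  · have := Real.rpow_le_one hx h hr
    have ht : 0 ≤ x ^ t := Real.rpow_nonneg hx t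
    linarith
  · have := Real.rpow_le_rpow_of_exponent_le h.le hrt
    have ht : 0 ≤ x ^ t := Real.rpow_nonneg hx t
    linarith

lemma rpow_mul_self (x r : ℝ) (hx : 0 ≤ x) (hr : 0 ≤ r) : x ^ r * x = x ^ (r + 1) := by
  rcases eq_or_lt_of_le hx with h | h
  · rw [← h]
    rw [mul_zero, Real.zero_rpow (by positivity)]
  · rw [Real.rpow_add_one (ne_of_gt h)]

lemma core_bound (p M q a x : ℝ) (hp : 1 < p) (hM : 0 < M) (hq0 : 0 ≤ q) (hqp : q < p)
    (ha : 0 ≤ a) (hx : 0 ≤ x) :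
    Real.exp (-p * a) * (M * ((1 + (Real.exp a * x) ^ q) * x)) ≤
      2 * M * Real.exp ((q - p) * a) * (1 + x ^ (p + 1)) := by
  have hE : (Real.exp a * x) ^ q = Real.exp (q * a) * x ^ q := by
    rw [Real.mul_rpow (Real.exp_pos a).le hx, ← Real.exp_mul, mul_comm a q]
  have hDE : Real.exp (-p * a) * Real.exp (q * a) = Real.exp ((q - p) * a) := by
    rw [← Real.exp_add]; ring_nf
  have hDle : Real.exp (-p * a) ≤ Real.exp ((q - p) * a) := by
    apply Real.exp_le_exp.mpr; nlinarith
  have h1 : x ≤ 1 + x ^ (p + 1) := by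
    have := rpow_le_one_add x 1 (p + 1) hx zero_le_one (by linarith)
    rwa [Real.rpow_one] at this
  have h2 : x ^ (q + 1) ≤ 1 + x ^ (p + 1) :=
    rpow_le_one_add x (q + 1) (p + 1) hx (by linarith) (by linarith)
  have hEpos : 0 < Real.exp ((q - p) * a) := Real.exp_pos _
  calc Real.exp (-p * a) * (M * ((1 + (Real.exp a * x) ^ q) * x))
      = M * (Real.exp (-p * a) * x +
          (Real.exp (-p * a) * Real.exp (q * a)) * (x ^ q * x)) := by rw [hE]; ring
    _ = M * (Real.exp (-p * a) * x + Real.exp ((q - p) * a) * x ^ (q + 1)) := by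
        rw [hDE, rpow_mul_self x q hx hq0]
    _ ≤ M * (Real.exp ((q - p) * a) * x + Real.exp ((q - p) * a) * x ^ (q + 1)) := by
        gcongr
    _ = M * Real.exp ((q - p) * a) * (x + x ^ (q + 1)) := by ring
    _ ≤ M * Real.exp ((q - p) * a) * ((1 + x ^ (p + 1)) + (1 + x ^ (p + 1))) := by
        apply mul_le_mul_of_nonneg_left (add_le_add h1 h2) (by positivity)
    _ = 2 * M * Real.exp ((q - p) * a) * (1 + x ^ (p + 1)) := by ring

lemma Fant_bound (f : ℝ → ℝ) (M q : ℝ) (hM : 0 ≤ M) (hq0 : 0 ≤ q)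
    (hf : ∀ u : ℝ, |f u| ≤ M * (1 + |u| ^ q)) (u : ℝ) :
    |Fant f u| ≤ M * ((1 + |u| ^ q) * |u|) := by
  have h : ∀ x ∈ Set.uIoc (0 : ℝ) u, ‖f x‖ ≤ M * (1 + |u| ^ q) := by
    intro x hx
    have hxu : |x| ≤ |u| := by
      rcases Set.mem_uIoc.mp hx with ⟨h1, h2⟩ | ⟨h1, h2⟩
      · rw [abs_of_pos h1]; exact h2.trans (le_abs_self u)
      · rw [abs_of_nonpos h2]
        have := neg_abs_le u
        linarith
    calc ‖f x‖ = |f x| := rfl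
      _ ≤ M * (1 + |x| ^ q) := hf x
      _ ≤ M * (1 + |u| ^ q) := by
          gcongr
  have := intervalIntegral.norm_integral_le_of_norm_le_const h
  rw [show M * ((1 + |u| ^ q) * |u|) = M * (1 + |u| ^ q) * |u - 0| by rw [sub_zero]; ring]
  exact this

/-- Estimate of the `f`-terms of the energy in similarity variables:
`e^{-2(p+1)s/(p-1)} ∫ |F(e^{2s/(p-1)} w)| ρ + e^{-2ps/(p-1)} ∫ |f(e^{2s/(p-1)} w) w| ρ`
`≤ C e^{-2(p-q)s/(p-1)} (1 + ∫ |w|^{p+1} ρ)`, as an inequality in `[0,∞]`,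
with `C = C(p,M,q)`. -/
theorem f_terms_integral_bound (p M q : ℝ) (hp : 1 < p) (hM : 0 < M)
    (hq0 : 0 ≤ q) (hqp : q < p) :
    ∃ C : ℝ, 0 < C ∧
      ∀ f : ℝ → ℝ, Continuous f → (∀ u : ℝ, |f u| ≤ M * (1 + |u| ^ q)) →
        ∀ s : ℝ, 0 ≤ s → ∀ w : ℝ → ℝ, Measurable w →
          (∫⁻ y in Ioo (-1 : ℝ) 1,
              ENNReal.ofReal (Real.exp (-2 * (p + 1) * s / (p - 1)) *
                |Fant f (Real.exp (2 * s / (p - 1)) * w y)| * rho p y))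
            + (∫⁻ y in Ioo (-1 : ℝ) 1,
                ENNReal.ofReal (Real.exp (-2 * p * s / (p - 1)) *
                  |f (Real.exp (2 * s / (p - 1)) * w y) * w y| * rho p y)) ≤
          ENNReal.ofReal (C * Real.exp (-2 * (p - q) * s / (p - 1))) *
            (1 + ∫⁻ y in Ioo (-1 : ℝ) 1, ENNReal.ofReal (|w y| ^ (p + 1) * rho p y)) := by
  refine ⟨8 * M, by positivity, ?_⟩
  intro f hfc hfb s hs w hw
  have hp1 : (0 : ℝ) < p - 1 := by linarith
  set a : ℝ := 2 * s / (p - 1) with ha_def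
  have ha : 0 ≤ a := div_nonneg (by linarith) hp1.le
  set E : ℝ := Real.exp ((q - p) * a) with hE_def
  have hEpos : 0 < E := Real.exp_pos _
  set I := ∫⁻ y in Ioo (-1 : ℝ) 1, ENNReal.ofReal (|w y| ^ (p + 1) * rho p y) with hI
  set R := ∫⁻ y in Ioo (-1 : ℝ) 1, ENNReal.ofReal (rho p y) with hRdef
  have e3 : Real.exp (-2 * (p - q) * s / (p - 1)) = E := by
    rw [hE_def, ha_def]; congr 1; ring
  set G : ℝ → ENNReal := fun y =>
    ENNReal.ofReal (2 * M * E) * ENNReal.ofReal (rho p y) +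
      ENNReal.ofReal (2 * M * E) * ENNReal.ofReal (|w y| ^ (p + 1) * rho p y) with hGdef
  -- common real bound
  have hcore : ∀ y : ℝ, 0 ≤ rho p y →
      Real.exp (-p * a) * (M * ((1 + (Real.exp a * |w y|) ^ q) * |w y|)) * rho p y ≤
        2 * M * E * rho p y + 2 * M * E * (|w y| ^ (p + 1) * rho p y) := by
    intro y hρ
    have h := core_bound p M q a |w y| hp hM hq0 hqp ha (abs_nonneg _)
    have := mul_le_mul_of_nonneg_right h hρ
    calc Real.exp (-p * a) * (M * ((1 + (Real.exp a * |w y|) ^ q) * |w y|)) * rho p y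
        ≤ 2 * M * E * (1 + |w y| ^ (p + 1)) * rho p y := this
      _ = 2 * M * E * rho p y + 2 * M * E * (|w y| ^ (p + 1) * rho p y) := by ring
  have hsplit : ∀ y : ℝ, 0 ≤ rho p y → ∀ t : ℝ,
      t ≤ 2 * M * E * rho p y + 2 * M * E * (|w y| ^ (p + 1) * rho p y) →
      ENNReal.ofReal t ≤ G y := by
    intro y hρ t ht
    have h1 : 0 ≤ 2 * M * E * rho p y := by positivity
    have h2 : 0 ≤ 2 * M * E * (|w y| ^ (p + 1) * rho p y) := by positivity
    calc ENNReal.ofReal t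
        ≤ ENNReal.ofReal (2 * M * E * rho p y + 2 * M * E * (|w y| ^ (p + 1) * rho p y)) :=
          ENNReal.ofReal_le_ofReal ht
      _ = G y := by
          simp only [hGdef]
          rw [← ENNReal.ofReal_mul (show (0:ℝ) ≤ 2 * M * E by positivity),
            ← ENNReal.ofReal_mul (show (0:ℝ) ≤ 2 * M * E by positivity),
            ← ENNReal.ofReal_add h1 h2]
  have habs : ∀ y : ℝ, |Real.exp (2 * s / (p - 1)) * w y| = Real.exp a * |w y| := by
    intro y
    rw [abs_mul, abs_of_pos (Real.exp_pos _), ha_def]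
  have hexp1 : Real.exp (-2 * (p + 1) * s / (p - 1)) * Real.exp a = Real.exp (-p * a) := by
    rw [← Real.exp_add]; congr 1; rw [ha_def]; ring
  have hexp2 : Real.exp (-2 * p * s / (p - 1)) = Real.exp (-p * a) := by
    congr 1; rw [ha_def]; ring
  -- claim 1
  have claim1 : ∀ y : ℝ,
      ENNReal.ofReal (Real.exp (-2 * (p + 1) * s / (p - 1)) *
        |Fant f (Real.exp (2 * s / (p - 1)) * w y)| * rho p y) ≤ G y := by
    intro y
    rcases lt_or_ge (rho p y) 0 with hρ | hρ
    · rw [ENNReal.ofReal_of_nonpos]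
      · exact zero_le
      · exact mul_nonpos_iff.mpr (Or.inl ⟨by positivity, hρ.le⟩)
    · refine hsplit y hρ _ ?_
      refine le_trans ?_ (hcore y hρ)
      apply mul_le_mul_of_nonneg_right _ hρ
      calc Real.exp (-2 * (p + 1) * s / (p - 1)) *
            |Fant f (Real.exp (2 * s / (p - 1)) * w y)|
          ≤ Real.exp (-2 * (p + 1) * s / (p - 1)) *
              (M * ((1 + |Real.exp (2 * s / (p - 1)) * w y| ^ q) *
                |Real.exp (2 * s / (p - 1)) * w y|)) := by
            apply mul_le_mul_of_nonneg_left (Fant_bound f M q hM.le hq0 hfb _) (Real.exp_pos _).le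
        _ = Real.exp (-p * a) * (M * ((1 + (Real.exp a * |w y|) ^ q) * |w y|)) := by
            rw [habs y, ← hexp1]; ring
  -- claim 2
  have claim2 : ∀ y : ℝ,
      ENNReal.ofReal (Real.exp (-2 * p * s / (p - 1)) *
        |f (Real.exp (2 * s / (p - 1)) * w y) * w y| * rho p y) ≤ G y := by
    intro y
    rcases lt_or_ge (rho p y) 0 with hρ | hρ
    · rw [ENNReal.ofReal_of_nonpos]
      · exact zero_le
      · exact mul_nonpos_iff.mpr (Or.inl ⟨by positivity, hρ.le⟩)
    · refine hsplit y hρ _ ?_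
      refine le_trans ?_ (hcore y hρ)
      apply mul_le_mul_of_nonneg_right _ hρ
      rw [hexp2]
      calc Real.exp (-p * a) * |f (Real.exp (2 * s / (p - 1)) * w y) * w y|
          = Real.exp (-p * a) * (|f (Real.exp (2 * s / (p - 1)) * w y)| * |w y|) := by
            rw [abs_mul]
        _ ≤ Real.exp (-p * a) *
              ((M * (1 + |Real.exp (2 * s / (p - 1)) * w y| ^ q)) * |w y|) := by
            apply mul_le_mul_of_nonneg_left
              (mul_le_mul_of_nonneg_right (hfb _) (abs_nonneg _)) (Real.exp_pos _).le
        _ = Real.exp (-p * a) * (M * ((1 + (Real.exp a * |w y|) ^ q) * |w y|)) := by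
            rw [habs y]; ring
  -- measurability
  have hmeas_rho : Measurable fun y : ℝ => ENNReal.ofReal (rho p y) := by
    apply ENNReal.measurable_ofReal.comp
    unfold rho
    fun_prop
  have hmeasG1 : Measurable fun y : ℝ => ENNReal.ofReal (2 * M * E) * ENNReal.ofReal (rho p y) :=
    hmeas_rho.const_mul _
  -- integral of G
  have hGint : ∫⁻ y in Ioo (-1 : ℝ) 1, G y = ENNReal.ofReal (2 * M * E) * (R + I) := by
    rw [hGdef]
    rw [lintegral_add_left hmeasG1, lintegral_const_mul' _ _ ENNReal.ofReal_ne_top,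
      lintegral_const_mul' _ _ ENNReal.ofReal_ne_top, ← hRdef, ← hI, mul_add]
  have hRle : R ≤ 2 := by
    have hb : ∀ y ∈ Ioo (-1 : ℝ) 1, ENNReal.ofReal (rho p y) ≤ 1 := by
      intro y hy
      apply ENNReal.ofReal_le_one.mpr
      apply Real.rpow_le_one (by nlinarith [hy.1, hy.2]) (by nlinarith [hy.1, hy.2])
        (by positivity)
    calc R ≤ ∫⁻ _ in Ioo (-1 : ℝ) 1, 1 := setLIntegral_mono measurable_const hb
      _ = volume (Ioo (-1 : ℝ) 1) := setLIntegral_one _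
      _ = ENNReal.ofReal 2 := by rw [Real.volume_Ioo]; norm_num
      _ ≤ 2 := by simp
  have hC : ENNReal.ofReal (8 * M * E) = 4 * ENNReal.ofReal (2 * M * E) := by
    rw [show (8 : ℝ) * M * E = 4 * (2 * M * E) by ring,
      ENNReal.ofReal_mul (by norm_num : (0 : ℝ) ≤ 4)]
    norm_num
  rw [e3, hC]
  calc (∫⁻ y in Ioo (-1 : ℝ) 1,
          ENNReal.ofReal (Real.exp (-2 * (p + 1) * s / (p - 1)) *
            |Fant f (Real.exp (2 * s / (p - 1)) * w y)| * rho p y))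
        + (∫⁻ y in Ioo (-1 : ℝ) 1,
            ENNReal.ofReal (Real.exp (-2 * p * s / (p - 1)) *
              |f (Real.exp (2 * s / (p - 1)) * w y) * w y| * rho p y))
      ≤ (∫⁻ y in Ioo (-1 : ℝ) 1, G y) + ∫⁻ y in Ioo (-1 : ℝ) 1, G y :=
        add_le_add (lintegral_mono claim1) (lintegral_mono claim2)
    _ = 2 * (ENNReal.ofReal (2 * M * E) * (R + I)) := by rw [hGint, ← two_mul]
    _ ≤ 2 * (ENNReal.ofReal (2 * M * E) * (2 + I)) := by gcongr
    _ ≤ 2 * (ENNReal.ofReal (2 * M * E) * (2 * (1 + I))) := by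
        gcongr
        rw [mul_add, mul_one]
        exact add_le_add_right (le_mul_of_one_le_left (show (0:ENNReal) ≤ I from zero_le) one_le_two) 2
    _ = 4 * ENNReal.ofReal (2 * M * E) * (1 + I) := by ring
end

section
/- Let p > 1, M > 0, and let g : ℝ⁴ → ℝ satisfy |g(X,t,v,z)| ≤ M(1+|v|+|z|) for all (X,t,v,z) ∈ ℝ⁴. Then there exists C = C(p,M) > 0 such that for all r₀ > 0, all T₀ ∈ ℝ, all s ≥ 0, every C¹ function w : (−1,1) → ℝ and every measurable function v : (−1,1) → ℝ: | ∫_{−1}^{1} e^{−2ps/(p−1)} g( r₀ + y e^{−s}, T₀ − e^{−s}, e^{(p+1)s/(p−1)} w'(y), e^{(p+1)s/(p−1)} ( v(y) + y w'(y) + (2/(p−1)) w(y) ) ) v(y) ρ(y) dy | ≤ C e^{−s} ∫_{−1}^{1} ( (w'(y))² (1−y²) + v(y)²/(1−y²) + w(y)² ) ρ(y) dy + C e^{−s}. -/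
open MeasureTheory Real Set

lemma key_real (κ τ a b c : ℝ) (hκ : 0 < κ) (hτ : 0 < τ) (hτ1 : τ ≤ 1)
    (ha : 0 ≤ a) (hb : 0 ≤ b) (hc : 0 ≤ c) :
    b + 2*a*b + b^2 + κ*(b*c) ≤ (3+κ) * (a^2*τ + b^2/τ + c^2 + 1) := by
  have h : a^2*τ + b^2/τ + c^2 + 1 = (a^2*τ^2 + b^2 + c^2*τ + τ)/τ := by
    rw [eq_div_iff hτ.ne']
    field_simp
  rw [h, ← mul_div_assoc, le_div_iff₀ hτ]
  nlinarith [sq_nonneg (a*τ - b), sq_nonneg (b - τ), sq_nonneg (b - c*τ),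
    mul_nonneg hκ.le (sq_nonneg (a*τ)), mul_nonneg hκ.le hτ.le,
    mul_nonneg hκ.le (mul_nonneg (sq_nonneg c) hτ.le),
    mul_nonneg hκ.le (sq_nonneg b), sq_nonneg b, sq_nonneg (a*τ),
    mul_nonneg (sq_nonneg c) hτ.le,
    mul_nonneg hκ.le (sq_nonneg (b - c*τ)),
    mul_nonneg (sq_nonneg b) (sub_nonneg.2 hτ1),
    mul_nonneg hκ.le (mul_nonneg (sq_nonneg c) (mul_nonneg hτ.le (sub_nonneg.2 hτ1))),
    mul_nonneg hτ.le (sub_nonneg.2 hτ1),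
    mul_nonneg (mul_nonneg hκ.le (sq_nonneg b)) (sub_nonneg.2 hτ1),
    mul_nonneg ha hb, mul_nonneg hb hc]

set_option maxHeartbeats 1000000 in
/-- Estimate of the term `I₄` in the proof of the Lyapunov-functional proposition:
`|∫ e^{-2ps/(p-1)} g(...) v ρ| ≤ C e^{-s} ∫ ((w')²(1-y²) + v²/(1-y²) + w²) ρ + C e^{-s}`,
with `C = C(p,M)`. -/
theorem g_term_integral_bound (p M : ℝ) (hp : 1 < p) (hM : 0 < M) :
    ∃ C : ℝ, 0 < C ∧
      ∀ g : ℝ → ℝ → ℝ → ℝ → ℝ, (∀ X t v z : ℝ, |g X t v z| ≤ M * (1 + |v| + |z|)) →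
        ∀ r₀ : ℝ, 0 < r₀ → ∀ T₀ : ℝ, ∀ s : ℝ, 0 ≤ s →
          ∀ w v : ℝ → ℝ, ContDiffOn ℝ 1 w (Ioo (-1 : ℝ) 1) → Measurable v →
            ENNReal.ofReal
                |∫ y in Ioo (-1 : ℝ) 1,
                  Real.exp (-2 * p * s / (p - 1)) *
                    g (r₀ + y * Real.exp (-s)) (T₀ - Real.exp (-s))
                      (Real.exp ((p + 1) * s / (p - 1)) * deriv w y)
                      (Real.exp ((p + 1) * s / (p - 1)) *
                        (v y + y * deriv w y + (2 / (p - 1)) * w y)) * v y * rho p y| ≤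
              ENNReal.ofReal (C * Real.exp (-s)) *
                  (∫⁻ y in Ioo (-1 : ℝ) 1,
                    ENNReal.ofReal (((deriv w y) ^ 2 * (1 - y ^ 2)
                      + (v y) ^ 2 / (1 - y ^ 2) + (w y) ^ 2) * rho p y))
                + ENNReal.ofReal (C * Real.exp (-s)) := by
  have hp1 : (0:ℝ) < p - 1 := by linarith
  set κ : ℝ := 2 / (p - 1) with hκdef
  have hκ : 0 < κ := by positivity
  set C₀ : ℝ := M * (3 + κ) with hC₀def
  have hC₀ : 0 < C₀ := by positivity
  refine ⟨2 * C₀, by positivity, ?_⟩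
  intro g hg r₀ hr₀ T₀ s hs w v hw hv
  set ε : ℝ := Real.exp (-s) with hεdef
  set E : ℝ := Real.exp (-2 * p * s / (p - 1)) with hEdef
  set K : ℝ := Real.exp ((p + 1) * s / (p - 1)) with hKdef
  have hεpos : 0 < ε := Real.exp_pos _
  have hEpos : 0 < E := Real.exp_pos _
  have hKpos : 0 < K := Real.exp_pos _
  have hEK : E * K = ε := by
    rw [hEdef, hKdef, hεdef, ← Real.exp_add]
    congr 1
    field_simp
    ring
  have hE : E ≤ ε := by
    rw [hEdef, hεdef]
    apply Real.exp_le_exp.2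
    rw [div_le_iff₀ hp1]
    nlinarith [mul_nonneg hs (by linarith : (0:ℝ) ≤ p + 1)]
  set f : ℝ → ℝ := fun y =>
    E * g (r₀ + y * ε) (T₀ - ε) (K * deriv w y)
      (K * (v y + y * deriv w y + κ * w y)) * v y * rho p y with hfdef
  set F : ℝ → ℝ := fun y =>
    (deriv w y) ^ 2 * (1 - y ^ 2) + (v y) ^ 2 / (1 - y ^ 2) + (w y) ^ 2 with hFdef
  have key : ∀ y ∈ Ioo (-1:ℝ) 1,
      ENNReal.ofReal |f y| ≤
        ENNReal.ofReal (C₀ * ε) * ENNReal.ofReal (F y * rho p y)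
          + ENNReal.ofReal (C₀ * ε) := by
    intro y hy
    obtain ⟨hy1, hy2⟩ := hy
    have hτ : (0:ℝ) < 1 - y ^ 2 := by nlinarith
    have hτ1 : (1:ℝ) - y ^ 2 ≤ 1 := by nlinarith
    have hρ0 : 0 ≤ rho p y := by
      unfold rho; exact Real.rpow_nonneg hτ.le _
    have hρ1 : rho p y ≤ 1 := by
      unfold rho; exact Real.rpow_le_one hτ.le hτ1 (by positivity)
    set a := |deriv w y| with hadef
    set b := |v y| with hbdef
    set c := |w y| with hcdef
    have ha : 0 ≤ a := abs_nonneg _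
    have hb : 0 ≤ b := abs_nonneg _
    have hc : 0 ≤ c := abs_nonneg _
    have habs : |f y| = E * |g (r₀ + y * ε) (T₀ - ε) (K * deriv w y)
        (K * (v y + y * deriv w y + κ * w y))| * b * rho p y := by
      rw [hfdef]
      simp only []
      rw [abs_mul, abs_mul, abs_mul, abs_of_pos hEpos, abs_of_nonneg hρ0, hbdef]
    have hgb : |g (r₀ + y * ε) (T₀ - ε) (K * deriv w y)
        (K * (v y + y * deriv w y + κ * w y))| ≤
        M * (1 + K * a + K * (b + a + κ * c)) := by
      refine (hg _ _ _ _).trans ?_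
      have h1 : |K * deriv w y| = K * a := by
        rw [abs_mul, abs_of_pos hKpos]
      have hyabs : |y| ≤ 1 := abs_le.2 ⟨hy1.le, hy2.le⟩
      have h2 : |K * (v y + y * deriv w y + κ * w y)| ≤ K * (b + a + κ * c) := by
        rw [abs_mul, abs_of_pos hKpos]
        apply mul_le_mul_of_nonneg_left _ hKpos.le
        calc |v y + y * deriv w y + κ * w y|
            ≤ |v y + y * deriv w y| + |κ * w y| := abs_add_le _ _
          _ ≤ |v y| + |y * deriv w y| + |κ * w y| := by
              linarith [abs_add_le (v y) (y * deriv w y)]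
          _ ≤ b + a + κ * c := by
              rw [abs_mul, abs_mul, abs_of_pos hκ]
              have : |y| * |deriv w y| ≤ a := by
                nlinarith [abs_nonneg (deriv w y)]
              linarith
      rw [h1]
      nlinarith [abs_nonneg (K * (v y + y * deriv w y + κ * w y))]
    have hreal : |f y| ≤ C₀ * ε * (F y * rho p y) + C₀ * ε := by
      have step1 : |f y| ≤ E * (M * (1 + K * a + K * (b + a + κ * c))) * b * rho p y := by
        rw [habs]
        gcongr
      have step2 : E * (M * (1 + K * a + K * (b + a + κ * c))) * b * rho p y
          ≤ M * ε * ((b + 2*a*b + b^2 + κ*(b*c)) * rho p y) := by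
        have hrw : E * (M * (1 + K * a + K * (b + a + κ * c))) * b * rho p y
            = M * (E * b + (E * K) * (2*(a*b) + b^2 + κ*(b*c))) * rho p y := by ring
        rw [hrw, hEK]
        have h3 : M * (E * b + ε * (2*(a*b) + b^2 + κ*(b*c))) * rho p y
            ≤ M * (ε * b + ε * (2*(a*b) + b^2 + κ*(b*c))) * rho p y := by
          gcongr
        calc M * (E * b + ε * (2*(a*b) + b^2 + κ*(b*c))) * rho p y
            ≤ M * (ε * b + ε * (2*(a*b) + b^2 + κ*(b*c))) * rho p y := h3
          _ = M * ε * ((b + 2*a*b + b^2 + κ*(b*c)) * rho p y) := by ring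
      have step3 : M * ε * ((b + 2*a*b + b^2 + κ*(b*c)) * rho p y)
          ≤ M * ε * (((3+κ) * (a^2*(1-y^2) + b^2/(1-y^2) + c^2 + 1)) * rho p y) := by
        have := key_real κ (1-y^2) a b c hκ hτ hτ1 ha hb hc
        gcongr
      have hFa : a^2 = (deriv w y)^2 := sq_abs _
      have hFb : b^2 = (v y)^2 := sq_abs _
      have hFc : c^2 = (w y)^2 := sq_abs _
      have step4 : M * ε * (((3+κ) * (a^2*(1-y^2) + b^2/(1-y^2) + c^2 + 1)) * rho p y)
          = C₀ * ε * (F y * rho p y) + C₀ * ε * rho p y := by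
        rw [hFdef]
        simp only []
        rw [← hFa, ← hFb, ← hFc, hC₀def]
        ring
      have step5 : C₀ * ε * rho p y ≤ C₀ * ε :=
        mul_le_of_le_one_right (by positivity) hρ1
      linarith [step1.trans (step2.trans (step3.trans_eq step4))]
    calc ENNReal.ofReal |f y|
        ≤ ENNReal.ofReal (C₀ * ε * (F y * rho p y) + C₀ * ε) :=
          ENNReal.ofReal_le_ofReal hreal
      _ ≤ ENNReal.ofReal (C₀ * ε * (F y * rho p y)) + ENNReal.ofReal (C₀ * ε) :=
          ENNReal.ofReal_add_le
      _ = ENNReal.ofReal (C₀ * ε) * ENNReal.ofReal (F y * rho p y)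
          + ENNReal.ofReal (C₀ * ε) := by
          rw [← ENNReal.ofReal_mul (by positivity)]
  calc ENNReal.ofReal |∫ y in Ioo (-1:ℝ) 1, f y|
      ≤ ∫⁻ y in Ioo (-1:ℝ) 1, ENNReal.ofReal |f y| := by
        simp only [← Real.enorm_eq_ofReal_abs]
        exact MeasureTheory.enorm_integral_le_lintegral_enorm _
    _ ≤ ∫⁻ y in Ioo (-1:ℝ) 1,
          (ENNReal.ofReal (C₀ * ε) * ENNReal.ofReal (F y * rho p y)
            + ENNReal.ofReal (C₀ * ε)) :=
        setLIntegral_mono' measurableSet_Ioo key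
    _ = ENNReal.ofReal (C₀ * ε) * (∫⁻ y in Ioo (-1:ℝ) 1, ENNReal.ofReal (F y * rho p y))
          + ENNReal.ofReal (C₀ * ε) * volume (Ioo (-1:ℝ) 1) := by
        rw [lintegral_add_right _ measurable_const,
          lintegral_const_mul' _ _ ENNReal.ofReal_ne_top, setLIntegral_const]
    _ ≤ ENNReal.ofReal (2 * C₀ * ε) * (∫⁻ y in Ioo (-1:ℝ) 1, ENNReal.ofReal (F y * rho p y))
          + ENNReal.ofReal (2 * C₀ * ε) := by
        gcongr
        · linarith
        · rw [Real.volume_Ioo, ← ENNReal.ofReal_mul (by positivity : (0:ℝ) ≤ C₀ * ε)]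
          exact ENNReal.ofReal_le_ofReal (le_of_eq (by norm_num; ring))
end
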